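/- arXiv:2404.17566 — 8 statements merged into one kernel-verified Lean document; each statement's English description precedes it below -/
import Mathlib

section
/- Let l be a prime number and n a nonnegative integer such that l^n divides q − 1. Let β ∈ F^* and let μ ∈ Ω satisfy μ^{l^n} = β. Let s be the least nonnegative integer such that μ^{l^s} ∈ F. Then s ≤ n and the degree [F(μ) : F] equals l^s; in particular F(μ) is the (unique) subfield of Ω with q^{l^s} elements. -/
open IntermediateField

open Polynomial in
/-- In an algebraic closure (indeed any extension) of a finite field `F` with `q` elements,
the elements of the image of `F` are exactly the solutions of `x ^ q = x`. -/
lemma aux_mem_range_iff_pow_card (q : ℕ) (F Ω : Type*) [Field F] [Fintype F]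
    (hq : Fintype.card F = q) [Field Ω] [Algebra F Ω] (x : Ω) :
    x ∈ (algebraMap F Ω).range ↔ x ^ q = x := by
  subst hq
  constructor
  · rintro ⟨c, rfl⟩
    rw [← map_pow, FiniteField.pow_card]
  · intro h
    classical
    have hsplits : ((X ^ Fintype.card F - X : F[X])).Splits := by
      have := (FiniteField.isSplittingField_sub F F).splits'
      simpa using this
    have hne : (X ^ Fintype.card F - X : F[X]) ≠ 0 :=
      FiniteField.X_pow_card_sub_X_ne_zero F Fintype.one_lt_card
    have hroot : x ∈ ((X ^ Fintype.card F - X : F[X]).map (algebraMap F Ω)).roots := by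
      rw [mem_roots']
      refine ⟨(Polynomial.map_ne_zero_iff (algebraMap F Ω).injective).mpr hne, ?_⟩
      simp [IsRoot, h, sub_eq_zero]
    rw [hsplits.roots_map, FiniteField.roots_X_pow_card_sub_X] at hroot
    obtain ⟨c, _, hc⟩ := Multiset.mem_map.mp hroot
    exact ⟨c, hc⟩

open Polynomial in
/-- Let `F` be a finite field with `q` elements, `Ω` an algebraic closure of `F`.
Let `l` be a prime and `n ≥ 0` with `l ^ n ∣ q - 1`. Let `β ∈ F^*` and `μ ∈ Ω` with
`μ ^ (l ^ n) = β`. Let `s` be the least nonnegative integer with `μ ^ (l ^ s) ∈ F`.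
Then `s ≤ n`, `[F(μ) : F] = l ^ s`, and `F(μ)` has `q ^ (l ^ s)` elements. -/
theorem stmt0 (q : ℕ) (F Ω : Type*) [Field F] [Fintype F] (hq : Fintype.card F = q)
    [Field Ω] [Algebra F Ω] [IsAlgClosure F Ω]
    (l : ℕ) (hl : l.Prime) (n : ℕ) (hdvd : l ^ n ∣ q - 1)
    (β : F) (hβ : β ≠ 0) (μ : Ω) (hμ : μ ^ l ^ n = algebraMap F Ω β)
    (s : ℕ) (hs : IsLeast {k : ℕ | μ ^ l ^ k ∈ (algebraMap F Ω).range} s) :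
    s ≤ n ∧ Module.finrank F F⟮μ⟯ = l ^ s ∧ Nat.card F⟮μ⟯ = q ^ l ^ s := by
  classical
  have hq2 : 1 < q := hq ▸ Fintype.one_lt_card
  have hln0 : l ^ n ≠ 0 := pow_ne_zero _ hl.pos.ne'
  have hμ0 : μ ≠ 0 := by
    rintro rfl
    rw [zero_pow hln0] at hμ
    exact hβ ((algebraMap F Ω).injective (by rw [← hμ, map_zero]))
  -- the root-of-unity ζ
  set ζ : Ω := μ ^ q / μ with hζdef
  have hζμ : μ ^ q = ζ * μ := by rw [hζdef, div_mul_cancel₀ _ hμ0]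
  have hβq : (algebraMap F Ω β) ^ q = algebraMap F Ω β := by
    rw [← map_pow]
    congr 1
    subst hq
    exact FiniteField.pow_card β
  have hζpow : ζ ^ l ^ n = 1 := by
    have h1 : (ζ * μ) ^ l ^ n = ζ ^ l ^ n * μ ^ l ^ n := mul_pow _ _ _
    have h2 : (μ ^ q) ^ l ^ n = μ ^ l ^ n := by
      rw [← pow_mul, mul_comm, pow_mul, hμ, hβq]
    rw [hζμ, h1] at h2
    have := mul_right_cancel₀ (pow_ne_zero _ hμ0) (h2.trans (one_mul _).symm)
    exact this
  have hζq : ζ ^ q = ζ := by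
    obtain ⟨c, hc⟩ := hdvd
    have hq1 : ζ ^ (q - 1) = 1 := by rw [hc, pow_mul, hζpow, one_pow]
    calc ζ ^ q = ζ ^ (q - 1) * ζ := by rw [← pow_succ]; congr 1; omega
    _ = ζ := by rw [hq1, one_mul]
  have hiter : ∀ k : ℕ, μ ^ q ^ k = ζ ^ k * μ := by
    intro k
    induction k with
    | zero => simp
    | succ k ih =>
      have hzqk : (ζ ^ k) ^ q = ζ ^ k := by rw [← pow_mul, mul_comm, pow_mul, hζq]
      calc μ ^ q ^ (k + 1) = (μ ^ q ^ k) ^ q := by rw [← pow_mul, ← pow_succ]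
      _ = (ζ ^ k) ^ q * μ ^ q := by rw [ih, mul_pow]
      _ = ζ ^ (k + 1) * μ := by rw [hzqk, hζμ, pow_succ]; ring
  -- membership characterization
  have hmemiff : ∀ k : ℕ, μ ^ l ^ k ∈ (algebraMap F Ω).range ↔ ζ ^ l ^ k = 1 := by
    intro k
    rw [aux_mem_range_iff_pow_card q F Ω hq]
    have hcalc : (μ ^ l ^ k) ^ q = ζ ^ l ^ k * μ ^ l ^ k := by
      rw [← pow_mul, mul_comm, pow_mul, hζμ, mul_pow]
    rw [hcalc]
    constructor
    · intro h
      exact mul_right_cancel₀ (pow_ne_zero _ hμ0) (h.trans (one_mul _).symm)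
    · intro h; rw [h, one_mul]
  -- ζ has order l ^ s
  have heord : orderOf ζ ∣ l ^ n := orderOf_dvd_of_pow_eq_one hζpow
  obtain ⟨t, htn, hte⟩ := (Nat.dvd_prime_pow hl).mp heord
  have hst : s = t := by
    have hmem : ∀ k : ℕ, (ζ ^ l ^ k = 1 ↔ t ≤ k) := by
      intro k
      rw [← orderOf_dvd_iff_pow_eq_one, hte]
      exact Nat.pow_dvd_pow_iff_le_right hl.one_lt
    have h1 : s ≤ t := hs.2 (by rw [Set.mem_setOf_eq, hmemiff, hmem])
    have h2 : t ≤ s := (hmem s).mp ((hmemiff s).mp hs.1)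
    omega
  have hsn : s ≤ n := hst ▸ htn
  have hζe : ζ ^ l ^ s = 1 := by rw [hst, ← hte]; exact pow_orderOf_eq_one ζ
  have hepos : 0 < l ^ s := pow_pos hl.pos s
  -- finite dimensionality
  have hint : IsIntegral F μ := Algebra.IsIntegral.isIntegral μ
  haveI : FiniteDimensional F F⟮μ⟯ := IntermediateField.adjoin.finiteDimensional hint
  haveI : Finite F⟮μ⟯ := Module.finite_of_finite F
  haveI : Fintype F⟮μ⟯ := Fintype.ofFinite _
  set d := Module.finrank F F⟮μ⟯ with hd
  have hdpos : 0 < d := Module.finrank_pos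
  have hcard : Fintype.card F⟮μ⟯ = q ^ d := by
    rw [← hq]; exact Module.card_eq_pow_finrank
  -- l ^ s divides d
  have hμd : μ ^ q ^ d = μ := by
    have h1 : (AdjoinSimple.gen F μ) ^ q ^ d = AdjoinSimple.gen F μ := by
      rw [← hcard]; exact FiniteField.pow_card _
    have h2 := congrArg (Subtype.val) h1
    simpa using h2
  have hed : l ^ s ∣ d := by
    rw [hst, ← hte]
    apply orderOf_dvd_of_pow_eq_one
    have := hiter d
    rw [hμd] at this
    exact mul_right_cancel₀ hμ0 ((one_mul μ).trans this).symm
  -- every element of F⟮μ⟯ satisfies x ^ q ^ (l ^ s) = x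
  obtain ⟨p, hp⟩ := CharP.exists F
  haveI : CharP F p := hp
  obtain ⟨f, hpprime, hqpf⟩ := FiniteField.card F p
  haveI : Fact p.Prime := ⟨hpprime⟩
  haveI : CharP Ω p := charP_of_injective_algebraMap (algebraMap F Ω).injective p
  haveI : ExpChar Ω p := ExpChar.prime hpprime
  have hfix : ∀ x ∈ F⟮μ⟯, x ^ q ^ l ^ s = x := by
    set σ : Ω →+* Ω := iterateFrobenius Ω p (f * l ^ s) with hσ
    have hσdef : ∀ x : Ω, σ x = x ^ q ^ l ^ s := by
      intro x
      rw [hσ, iterateFrobenius_def, pow_mul, ← hq, hqpf]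
    intro x hx
    rw [← hσdef]
    induction hx using IntermediateField.adjoin_induction with
    | mem y hy =>
      rw [Set.mem_singleton_iff] at hy
      subst hy
      rw [hσdef, hiter, hζe, one_mul]
    | algebraMap y =>
      rw [hσdef, ← map_pow]
      congr 1
      subst hq
      exact FiniteField.pow_card_pow _ _
    | add x y hx hy ihx ihy => rw [map_add, ihx, ihy]
    | inv x hx ihx => rw [map_inv₀, ihx]
    | mul x y hx hy ihx ihy => rw [map_mul, ihx, ihy]
  -- counting: d ≤ l ^ s
  have hdle : d ≤ l ^ s := by
    set P : Polynomial Ω := X ^ q ^ l ^ s - X with hP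
    have hPne : P ≠ 0 :=
      FiniteField.X_pow_card_pow_sub_X_ne_zero Ω hepos.ne' hq2
    have hPdeg : P.natDegree = q ^ l ^ s :=
      FiniteField.X_pow_card_pow_sub_X_natDegree_eq Ω hepos.ne' hq2
    have hinj : Function.Injective (fun x : F⟮μ⟯ => (⟨(x : Ω), by
        rw [Multiset.mem_toFinset, mem_roots hPne]
        simp only [hP, IsRoot, eval_sub, eval_pow, eval_X, sub_eq_zero]
        exact hfix x.1 x.2⟩ : P.roots.toFinset)) := by
      intro a b hab
      simp only [Subtype.mk.injEq] at hab
      exact Subtype.ext hab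
    have h1 : Fintype.card F⟮μ⟯ ≤ P.roots.toFinset.card := by
      simpa using Fintype.card_le_of_injective _ hinj
    have h2 : (P.roots.toFinset.card : ℕ) ≤ Multiset.card P.roots :=
      Multiset.toFinset_card_le _
    have h3 : Multiset.card P.roots ≤ P.natDegree := by
      simpa [hPdeg] using P.card_roots' 
    have : q ^ d ≤ q ^ l ^ s := by
      rw [← hcard, ← hPdeg]; omega
    exact (Nat.pow_le_pow_iff_right hq2).mp this
  have hdeq : d = l ^ s := Nat.le_antisymm hdle (Nat.le_of_dvd hdpos hed)
  refine ⟨hsn, hdeq, ?_⟩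
  rw [Nat.card_eq_fintype_card, hcard, hdeq]
end

section
/- Let l be a prime number and n a nonnegative integer such that l^n divides q − 1. Let β ∈ F^* and let μ ∈ Ω satisfy μ^{l^n} = β. Let s be the least nonnegative integer such that θ := μ^{l^s} lies in F. Then the polynomial X^{l^s} − θ is irreducible in F[X]. -/
open IntermediateField Polynomial

/-- In an algebra over a finite field `F`, any element fixed by the `q`-power map
(`q = |F|`) lies in the image of `F`. -/
theorem aux_mem_range_of_pow_card {F Ω : Type*} [Field F] [Fintype F] [Field Ω] [Algebra F Ω]
    (y : Ω) (h : y ^ Fintype.card F = y) : y ∈ (algebraMap F Ω).range := by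
  classical
  set q := Fintype.card F with hqdef
  have hq1 : 1 < q := Fintype.one_lt_card
  set g : Polynomial Ω := X ^ q - X with hg
  have hg0 : g ≠ 0 := FiniteField.X_pow_card_sub_X_ne_zero Ω hq1
  have hdeg : g.natDegree = q := FiniteField.X_pow_card_sub_X_natDegree_eq Ω hq1
  set S : Finset Ω := Finset.univ.image (algebraMap F Ω) with hS
  have hScard : S.card = q := by
    rw [hS, Finset.card_image_of_injective _ (algebraMap F Ω).injective, Finset.card_univ]
  have hroot : ∀ a : Ω, g.eval a = 0 ↔ a ^ q = a := by
    intro a; simp [hg, sub_eq_zero]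
  have hSsub : S ⊆ g.roots.toFinset := by
    intro a ha
    rw [Multiset.mem_toFinset, mem_roots hg0, IsRoot.def, hroot]
    obtain ⟨b, -, rfl⟩ := Finset.mem_image.mp ha
    rw [← map_pow, FiniteField.pow_card]
  have hcard : g.roots.toFinset.card ≤ q :=
    le_trans (Multiset.toFinset_card_le _) (le_trans (Polynomial.card_roots' g) (le_of_eq hdeg))
  have hSeq : S = g.roots.toFinset :=
    Finset.eq_of_subset_of_card_le hSsub (by rw [hScard]; exact hcard)
  have hy : y ∈ g.roots.toFinset := by
    rw [Multiset.mem_toFinset, mem_roots hg0, IsRoot.def, hroot]; exact h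
  rw [← hSeq] at hy
  obtain ⟨b, -, hb⟩ := Finset.mem_image.mp hy
  exact ⟨b, hb⟩

/-- Let `F` be a finite field with `q` elements, `Ω` an algebraic closure of `F`.
Let `l` be a prime and `n ≥ 0` with `l ^ n ∣ q - 1`. Let `β ∈ F^*` and `μ ∈ Ω` with
`μ ^ (l ^ n) = β`. Let `s` be the least nonnegative integer such that
`θ := μ ^ (l ^ s)` lies in `F`. Then `X ^ (l ^ s) - θ` is irreducible in `F[X]`. -/
theorem stmt1 (q : ℕ) (F Ω : Type*) [Field F] [Fintype F] (hq : Fintype.card F = q)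
    [Field Ω] [Algebra F Ω] [IsAlgClosure F Ω]
    (l : ℕ) (hl : l.Prime) (n : ℕ) (hdvd : l ^ n ∣ q - 1)
    (β : F) (hβ : β ≠ 0) (μ : Ω) (hμ : μ ^ l ^ n = algebraMap F Ω β)
    (s : ℕ) (hs : IsLeast {k : ℕ | μ ^ l ^ k ∈ (algebraMap F Ω).range} s)
    (θ : F) (hθ : algebraMap F Ω θ = μ ^ l ^ s) :
    Irreducible (Polynomial.X ^ l ^ s - Polynomial.C θ) := by
  classical
  subst hq
  set q := Fintype.card F with hqdef
  have hq1 : 1 < q := Fintype.one_lt_card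
  have hln0 : (l : ℕ) ^ n ≠ 0 := pow_ne_zero n hl.pos.ne'
  have hμ0 : μ ≠ 0 := by
    intro h
    apply hβ
    have : (0 : Ω) = algebraMap F Ω β := by rw [← hμ, h, zero_pow hln0]
    exact ((algebraMap F Ω).injective (by rw [map_zero, this])).symm
  have hsn : s ≤ n := hs.2 ⟨β, hμ.symm⟩
  have hls : (l : ℕ) ^ s ∣ q - 1 := dvd_trans (pow_dvd_pow l hsn) hdvd
  -- ζ = μ^(q-1)
  set ζ : Ω := μ ^ (q - 1) with hζdef
  have key : ∀ t : ℕ, ζ ^ l ^ t = 1 ↔ μ ^ l ^ t ∈ (algebraMap F Ω).range := by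
    intro t
    have h1 : ζ ^ l ^ t = (μ ^ l ^ t) ^ (q - 1) := by
      rw [hζdef, ← pow_mul, ← pow_mul, mul_comm]
    constructor
    · intro h
      apply aux_mem_range_of_pow_card
      calc (μ ^ l ^ t) ^ q = (μ ^ l ^ t) ^ (q - 1) * (μ ^ l ^ t) := by
            rw [← pow_succ, Nat.sub_add_cancel (by omega : 1 ≤ q)]
        _ = μ ^ l ^ t := by rw [← h1, h, one_mul]
    · rintro ⟨c, hc⟩
      have hc0 : c ≠ 0 := by
        intro h0
        apply pow_ne_zero (l ^ t) hμ0
        rw [← hc, h0, map_zero]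
      rw [h1, ← hc, ← map_pow, FiniteField.pow_card_sub_one_eq_one c hc0, map_one]
  have hζs : ζ ^ l ^ s = 1 := (key s).2 ⟨θ, hθ⟩
  have horder : orderOf ζ = l ^ s := by
    have hd : orderOf ζ ∣ l ^ s := orderOf_dvd_of_pow_eq_one hζs
    obtain ⟨t, ht, hteq⟩ := (Nat.dvd_prime_pow hl).1 hd
    rcases lt_or_eq_of_le ht with hlt | hEq
    · exfalso
      have h1 : ζ ^ l ^ t = 1 := by rw [← hteq]; exact pow_orderOf_eq_one ζ
      exact absurd (hs.2 ((key t).1 h1)) (Nat.not_le.2 hlt)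
    · rw [hteq, hEq]
  -- μ is integral over F
  have halg : Algebra.IsAlgebraic F Ω := IsAlgClosure.isAlgebraic
  have hint : IsIntegral F μ := (halg.isAlgebraic μ).isIntegral
  set d := (minpoly F μ).natDegree with hddef
  have hd0 : 0 < d := minpoly.natDegree_pos hint
  -- the polynomial
  have hls0 : (l : ℕ) ^ s ≠ 0 := pow_ne_zero s hl.pos.ne'
  have haev : (Polynomial.aeval μ) (X ^ l ^ s - C θ) = 0 := by
    simp [hθ]
  have hdvdf : minpoly F μ ∣ X ^ l ^ s - C θ := minpoly.dvd F μ haev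
  have hfne : (X ^ l ^ s - C θ : F[X]) ≠ 0 :=
    (monic_X_pow_sub_C θ hls0).ne_zero
  have hfdeg : (X ^ l ^ s - C θ : F[X]).natDegree = l ^ s := by
    exact natDegree_X_pow_sub_C
  have hdle : d ≤ l ^ s := by
    have := Polynomial.natDegree_le_of_dvd hdvdf hfne
    rwa [hfdeg] at this
  -- lower bound: l ^ s ∣ d via ζ ^ d = 1
  have hfdμ : FiniteDimensional F F⟮μ⟯ := IntermediateField.adjoin.finiteDimensional hint
  have hfin : Finite F⟮μ⟯ := Module.finite_of_finite F
  have hfty : Fintype F⟮μ⟯ := Fintype.ofFinite _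
  have hrank : Module.finrank F F⟮μ⟯ = d := IntermediateField.adjoin.finrank hint
  have hcardμ : Fintype.card F⟮μ⟯ = q ^ d := by
    rw [Module.card_eq_pow_finrank (K := F) (V := F⟮μ⟯), hrank]
  have hμd : μ ^ q ^ d = μ := by
    have h1 : (IntermediateField.AdjoinSimple.gen F μ) ^ Fintype.card F⟮μ⟯
        = IntermediateField.AdjoinSimple.gen F μ := FiniteField.pow_card _
    have h2 := congrArg (algebraMap F⟮μ⟯ Ω) h1
    rwa [map_pow, IntermediateField.AdjoinSimple.algebraMap_gen, hcardμ] at h2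
  have hζq : ζ ^ q = ζ := by
    obtain ⟨m, hm⟩ := hls
    calc ζ ^ q = ζ ^ (q - 1) * ζ := by
          rw [← pow_succ, Nat.sub_add_cancel (by omega : 1 ≤ q)]
      _ = ζ := by rw [hm, pow_mul, hζs, one_pow, one_mul]
  have hind : ∀ k : ℕ, μ ^ q ^ k = ζ ^ k * μ := by
    intro k
    induction k with
    | zero => simp
    | succ k ih =>
      calc μ ^ q ^ (k + 1) = (μ ^ q ^ k) ^ q := by rw [← pow_mul, pow_succ]
        _ = (ζ ^ k) ^ q * μ ^ q := by rw [ih, mul_pow]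
        _ = ζ ^ k * (μ ^ (q - 1) * μ) := by
            rw [← pow_mul, mul_comm k q, pow_mul, hζq, ← pow_succ,
              Nat.sub_add_cancel (by omega : 1 ≤ q)]
        _ = ζ ^ (k + 1) * μ := by rw [← hζdef, pow_succ, mul_assoc, mul_comm ζ μ, ← mul_assoc]
  have hζd : ζ ^ d = 1 := by
    have h1 := hind d
    rw [hμd] at h1
    have h2 : ζ ^ d * μ = 1 * μ := by rw [one_mul, ← h1]
    exact mul_right_cancel₀ hμ0 h2
  have hdvd' : (l : ℕ) ^ s ∣ d := horder ▸ orderOf_dvd_of_pow_eq_one hζd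
  have hdge : (l : ℕ) ^ s ≤ d := Nat.le_of_dvd hd0 hdvd'
  -- conclude
  have heq : (X ^ l ^ s - C θ : F[X]) = minpoly F μ :=
    Polynomial.eq_of_monic_of_dvd_of_natDegree_le (minpoly.monic hint)
      (monic_X_pow_sub_C θ hls0) hdvdf (by rw [hfdeg]; exact hdge)
  rw [heq]
  exact minpoly.irreducible hint
end

section
/- Let l be a prime number and let n, m be nonnegative integers such that l^{n+m} divides q − 1. Let β ∈ F^*, let μ ∈ Ω satisfy μ^{l^n} = β and μ ∉ F, and let s be the least nonnegative integer such that μ^{l^s} ∈ F (so s ≥ 1). Then for every δ ∈ Ω with δ^{l^{n+m}} = β one has [F(δ) : F] = l^{s+m}. -/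
open IntermediateField

open Polynomial in
private lemma card_le_of_pow_eq {Ω : Type*} [Field Ω] (N : ℕ) (hN : 1 < N) (S : Finset Ω)
    (hS : ∀ z ∈ S, z ^ N = z) : S.card ≤ N := by
  classical
  set P : Polynomial Ω := X ^ N - X with hP
  have hdeg : P.natDegree = N := by
    rw [hP, natDegree_sub_eq_left_of_natDegree_lt (by simpa using hN)]
    simp
  have hsub : S ⊆ P.roots.toFinset := by
    intro z hz
    rw [Multiset.mem_toFinset, mem_roots']
    refine ⟨ne_zero_of_natDegree_gt (n := 0) (by omega), ?_⟩
    show P.eval z = 0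
    simp [hP, hS z hz, sub_eq_zero]
  calc S.card ≤ P.roots.toFinset.card := Finset.card_le_card hsub
    _ ≤ Multiset.card P.roots := Multiset.toFinset_card_le _
    _ ≤ P.natDegree := P.card_roots'
    _ = N := hdeg

private lemma mem_range_iff_pow_card {F Ω : Type*} [Field F] [Fintype F] [Field Ω]
    [Algebra F Ω] (x : Ω) :
    x ∈ (algebraMap F Ω).range ↔ x ^ Fintype.card F = x := by
  classical
  have hq : 1 < Fintype.card F := Fintype.one_lt_card
  constructor
  · rintro ⟨y, rfl⟩
    rw [← map_pow, FiniteField.pow_card]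
  · intro h
    set S : Finset Ω := Finset.univ.image (algebraMap F Ω) with hSdef
    have hcardS : S.card = Fintype.card F := by
      rw [hSdef, Finset.card_image_of_injective _ (algebraMap F Ω).injective, Finset.card_univ]
    have hSpow : ∀ z ∈ S, z ^ Fintype.card F = z := by
      intro z hz
      obtain ⟨y, _, rfl⟩ := Finset.mem_image.mp hz
      rw [← map_pow, FiniteField.pow_card]
    by_contra hx
    have hxS : x ∉ S := by
      intro hxS
      obtain ⟨y, _, rfl⟩ := Finset.mem_image.mp hxS
      exact hx ⟨y, rfl⟩
    have := card_le_of_pow_eq _ hq (insert x S) (by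
      intro z hz
      rcases Finset.mem_insert.mp hz with rfl | hz
      · exact h
      · exact hSpow z hz)
    rw [Finset.card_insert_of_notMem hxS, hcardS] at this
    omega

private lemma finrank_isLeast {F Ω : Type*} [Field F] [Fintype F] [Field Ω]
    [Algebra F Ω] [IsAlgClosure F Ω] (x : Ω) :
    IsLeast {d | 0 < d ∧ x ^ (Fintype.card F) ^ d = x} (Module.finrank F F⟮x⟯) := by
  classical
  have hq : 1 < Fintype.card F := Fintype.one_lt_card
  haveI : Algebra.IsAlgebraic F Ω := IsAlgClosure.isAlgebraic
  have hint : IsIntegral F x := Algebra.IsIntegral.isIntegral x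
  haveI : FiniteDimensional F F⟮x⟯ := IntermediateField.adjoin.finiteDimensional hint
  haveI : Finite F⟮x⟯ := Module.finite_of_finite F
  haveI : Fintype F⟮x⟯ := Fintype.ofFinite _
  set d := Module.finrank F F⟮x⟯ with hd
  have hcard : Fintype.card F⟮x⟯ = Fintype.card F ^ d := Module.card_eq_pow_finrank
  have hdpos : 0 < d := Module.finrank_pos
  constructor
  · refine ⟨hdpos, ?_⟩
    have hgen := FiniteField.pow_card (AdjoinSimple.gen F x)
    rw [hcard] at hgen
    have := congrArg (algebraMap F⟮x⟯ Ω) hgen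
    rwa [map_pow] at this
  · rintro d' ⟨hd'pos, hfix⟩
    set p := ringChar F with hp
    haveI : CharP F p := ringChar.charP F
    obtain ⟨k, hpprime, hcardF⟩ := FiniteField.card F p
    haveI : Fact p.Prime := ⟨hpprime⟩
    haveI : CharP Ω p := charP_of_injective_algebraMap (algebraMap F Ω).injective p
    haveI : ExpChar Ω p := inferInstance
    set ψ : Ω →+* Ω := iterateFrobenius Ω p ((k : ℕ) * d') with hψ
    have hψdef : ∀ z : Ω, ψ z = z ^ (Fintype.card F) ^ d' := by
      intro z
      rw [hψ, iterateFrobenius_def, hcardF, ← pow_mul]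
    have hcomm : ∀ a : F, ψ (algebraMap F Ω a) = algebraMap F Ω a := by
      intro a
      rw [hψdef, ← map_pow, FiniteField.pow_card_pow]
    set Ψ : Ω →ₐ[F] Ω := { toRingHom := ψ, commutes' := hcomm } with hΨ
    have hxeq : x ∈ AlgHom.equalizer Ψ (AlgHom.id F Ω) := by
      rw [AlgHom.mem_equalizer]
      show ψ x = x
      rw [hψdef]; exact hfix
    have hadj : Algebra.adjoin F {x} ≤ AlgHom.equalizer Ψ (AlgHom.id F Ω) :=
      Algebra.adjoin_le (Set.singleton_subset_iff.mpr hxeq)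
    have hall : ∀ y : F⟮x⟯, (y : Ω) ^ (Fintype.card F) ^ d' = (y : Ω) := by
      intro y
      have hy : (y : Ω) ∈ Algebra.adjoin F {x} := by
        rw [← IntermediateField.adjoin_simple_toSubalgebra_of_isAlgebraic hint.isAlgebraic]
        exact y.2
      have h1 := hadj hy
      rw [AlgHom.mem_equalizer] at h1
      have h2 : ψ (y : Ω) = (y : Ω) := h1
      rwa [hψdef] at h2
    set S : Finset Ω := Finset.univ.image ((↑) : F⟮x⟯ → Ω) with hS
    have hcardS : S.card = Fintype.card F ^ d := by
      rw [hS, Finset.card_image_of_injective _ Subtype.val_injective, Finset.card_univ, hcard]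
    have hle : S.card ≤ (Fintype.card F) ^ d' :=
      card_le_of_pow_eq _ (Nat.one_lt_pow (by omega) hq) S (by
        intro z hz
        obtain ⟨y, _, rfl⟩ := Finset.mem_image.mp hz
        exact hall y)
    rw [hcardS] at hle
    exact (Nat.pow_le_pow_iff_right hq).mp hle

private lemma geom_odd_val (q d : ℕ) (hq : 2 ≤ q) (hqodd : ¬ 2 ∣ q) (hd : Odd d) :
    padicValNat 2 (q ^ d - 1) = padicValNat 2 (q - 1) := by
  set S : ℕ := ∑ i ∈ Finset.range d, q ^ i with hS
  have key : S * (q - 1) = q ^ d - 1 := by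
    have h1 : (1:ℕ) ≤ q := by omega
    have h2 : (1:ℕ) ≤ q ^ d := Nat.one_le_pow _ _ (by omega)
    have h := geom_sum_mul (q : ℤ) d
    have hcast : ((S * (q - 1) : ℕ) : ℤ) = ((q ^ d - 1 : ℕ) : ℤ) := by
      push_cast [Nat.cast_sub h1, Nat.cast_sub h2, hS]
      simpa using h
    exact_mod_cast hcast
  have hSodd : ¬ 2 ∣ S := by
    rw [← ZMod.natCast_eq_zero_iff]
    have hq2 : (q : ZMod 2) = 1 := by
      have : ((q % 2 : ℕ) : ZMod 2) = (q : ZMod 2) := by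
        rw [ZMod.natCast_mod]
      rw [← this, (by omega : q % 2 = 1)]; simp
    have hcS : ((S : ℕ) : ZMod 2) = (d : ZMod 2) := by
      rw [hS]; push_cast [hq2]; simp
    rw [hcS]
    have hd2 : (d % 2 : ℕ) = 1 := Nat.odd_iff.mp hd
    have : ((d % 2 : ℕ) : ZMod 2) = (d : ZMod 2) := by rw [ZMod.natCast_mod]
    rw [← this, hd2]; simp
  haveI : Fact (Nat.Prime 2) := ⟨Nat.prime_two⟩
  have hq1 : q - 1 ≠ 0 := by omega
  have hSne : S ≠ 0 := by rintro h; exact hSodd (h ▸ dvd_zero 2)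
  rw [← key, padicValNat.mul hSne hq1, padicValNat.eq_zero_of_not_dvd hSodd, zero_add]

private lemma nt_least (l q u v c : ℕ) (hl : l.Prime) (hq : 2 ≤ q)
    (hu : u ∣ q - 1) (hul : ¬ l ∣ u) (hv : padicValNat l (q - 1) = v) (hv1 : 1 ≤ v)
    (hc1 : 1 ≤ c) (hspecial : l = 2 → v = 1 → c = 1) :
    IsLeast {d | 0 < d ∧ l ^ (v + c) * u ∣ q ^ d - 1} (l ^ c) := by
  haveI : Fact l.Prime := ⟨hl⟩
  have hq1 : q - 1 ≠ 0 := by omega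
  have hldvd : l ∣ q - 1 := by
    have := (padicValNat_dvd_iff_le (p := l) (n := 1) hq1).mpr (by omega)
    simpa using this
  have hlq : ¬ l ∣ q := by
    intro h
    have h2 : l ∣ q - (q - 1) := Nat.dvd_sub h hldvd
    rw [(by omega : q - (q - 1) = 1)] at h2
    exact Nat.Prime.one_lt hl |>.ne' (Nat.eq_one_of_dvd_one h2 ▸ (Nat.dvd_one.mp h2))
  have hpowne : ∀ d : ℕ, 0 < d → q ^ d - 1 ≠ 0 := fun d hd => by
    have : 2 ≤ q ^ d := le_trans hq (Nat.le_self_pow (by omega) q)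
    omega
  have hval : ∀ d : ℕ, 0 < d → (l ^ (v + c) * u ∣ q ^ d - 1 ↔ v + c ≤ padicValNat l (q ^ d - 1)) := by
    intro d hd
    constructor
    · intro h
      exact (padicValNat_dvd_iff_le (hpowne d hd)).mp (dvd_trans (dvd_mul_right _ _) h)
    · intro h
      refine Nat.Coprime.mul_dvd_of_dvd_of_dvd ?_ ((padicValNat_dvd_iff_le (hpowne d hd)).mpr h) ?_
      · exact Nat.Coprime.pow_left _ ((Nat.Prime.coprime_iff_not_dvd hl).mpr hul)
      · exact dvd_trans hu (by simpa using Nat.sub_dvd_pow_sub_pow q 1 d)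
  have hvform : ∀ d : ℕ, 0 < d → (v + c ≤ padicValNat l (q ^ d - 1) ↔ l ^ c ∣ d) := by
    intro d hd
    rcases hl.eq_two_or_odd' with rfl | hlodd
    · have hq2 : ¬ 2 ∣ q := hlq
      rcases Nat.even_or_odd d with hde | hdo
      · have heq := padicValNat.pow_two_sub_pow (x := q) (y := 1) (by omega) (by simpa using hldvd)
          hq2 (by omega) hde
        simp only [one_pow] at heq
        rw [hv] at heq
        have hq1v : 1 ≤ padicValNat 2 (q + 1) := by
          have h21 : (2:ℕ) ^ 1 ∣ q + 1 := by
            have : q % 2 = 1 := Nat.odd_iff.mp (Nat.odd_iff.mpr (by omega))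
            omega
          exact (padicValNat_dvd_iff_le (by omega)).mp h21
        rcases Nat.lt_or_ge v 2 with hv2 | hv2
        · have hc : c = 1 := hspecial rfl (by omega)
          subst hc
          have h2d : (2:ℕ) ∣ d := hde.two_dvd
          have hVd : 1 ≤ padicValNat 2 d :=
            (padicValNat_dvd_iff_le (by omega)).mp (by simpa using h2d)
          constructor
          · intro _; simpa using h2d
          · intro _; omega
        · have h4 : (2:ℕ)^2 ∣ q - 1 := (padicValNat_dvd_iff_le hq1).mpr (by omega)
          have hq41 : ¬ (2:ℕ)^2 ∣ q + 1 := by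
            intro h
            have h42 : (4:ℕ) ∣ (q+1) - (q-1) := Nat.dvd_sub (by simpa using h) (by simpa using h4)
            rw [(by omega : q + 1 - (q-1) = 2)] at h42
            omega
          have hq1v' : padicValNat 2 (q + 1) ≤ 1 := by
            by_contra hcon
            exact hq41 ((padicValNat_dvd_iff_le (by omega)).mpr (by omega))
          have hq1eq : padicValNat 2 (q + 1) = 1 := le_antisymm hq1v' hq1v
          rw [hq1eq] at heq
          have heq2 : padicValNat 2 (q ^ d - 1) = v + padicValNat 2 d := by omega
          rw [heq2]
          constructor
          · intro h
            exact (padicValNat_dvd_iff_le (by omega)).mpr (by omega)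
          · intro h
            have := (padicValNat_dvd_iff_le (p := 2) (a := d) (by omega)).mp h
            omega
      · rw [geom_odd_val q d hq hq2 hdo, hv]
        constructor
        · intro h; omega
        · intro h
          have := Nat.le_of_dvd hd h
          obtain ⟨k, hk⟩ := hdo
          have h2c : (2:ℕ) ∣ 2 ^ c := dvd_pow_self 2 (by omega)
          have := (h2c.trans h)
          omega
    · have heq := padicValNat.pow_sub_pow (p := l) hlodd (x := q) (y := 1) (by omega)
        (by simpa using hldvd) hlq (by omega : d ≠ 0)
      simp only [one_pow] at heq
      rw [hv] at heq
      rw [heq]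
      constructor
      · intro h
        exact (padicValNat_dvd_iff_le (by omega)).mpr (by omega)
      · intro h
        have := (padicValNat_dvd_iff_le (p := l) (a := d) (by omega)).mp h
        omega
  have hDpos : 0 < l ^ c := pow_pos hl.pos c
  exact ⟨⟨hDpos, (hval _ hDpos).mpr ((hvform _ hDpos).mpr dvd_rfl)⟩,
    fun d hd => Nat.le_of_dvd hd.1 ((hvform d hd.1).mp ((hval d hd.1).mp hd.2))⟩

private lemma decomp (l x : ℕ) (hl : l.Prime) (hx : x ≠ 0) :
    ∃ u, x = l ^ padicValNat l x * u ∧ ¬ l ∣ u := by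
  haveI : Fact l.Prime := ⟨hl⟩
  set V := padicValNat l x with hV
  obtain ⟨u, hu⟩ := pow_padicValNat_dvd (p := l) (n := x)
  refine ⟨u, hu, fun hdvd => ?_⟩
  obtain ⟨w, hw⟩ := hdvd
  have h2 : l ^ (V + 1) ∣ x := ⟨w, by rw [hu, hw, pow_succ]; ring⟩
  have h3 := (padicValNat_dvd_iff_le hx).mp h2
  rw [← hV] at h3
  omega

private lemma split_dvd {l a b u w : ℕ} (hl : l.Prime) (hu : ¬ l ∣ u) (hw : ¬ l ∣ w)
    (h : l ^ a * u ∣ l ^ b * w) : a ≤ b ∧ u ∣ w := by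
  have hcu : Nat.Coprime u l := (Nat.coprime_comm.mp ((Nat.Prime.coprime_iff_not_dvd hl).mpr hu))
  have hcw : Nat.Coprime (l ^ a) w := Nat.Coprime.pow_left _ ((Nat.Prime.coprime_iff_not_dvd hl).mpr hw)
  constructor
  · have h1 : l ^ a ∣ l ^ b * w := dvd_trans (dvd_mul_right _ _) h
    have h2 : l ^ a ∣ l ^ b := (Nat.Coprime.dvd_of_dvd_mul_right hcw h1)
    exact (Nat.pow_dvd_pow_iff_le_right hl.one_lt).mp h2
  · have h1 : u ∣ l ^ b * w := dvd_trans (dvd_mul_left _ _) h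
    exact (Nat.Coprime.pow_right b hcu).dvd_of_dvd_mul_left h1

private lemma pow_card_iff {Ω : Type*} [Field Ω] {x : Ω} (hx : x ≠ 0) {q : ℕ} (hq : 1 ≤ q) :
    x ^ q = x ↔ x ^ (q - 1) = 1 := by
  obtain ⟨r, rfl⟩ : ∃ r, q = r + 1 := ⟨q - 1, by omega⟩
  simp only [Nat.add_sub_cancel, pow_succ]
  constructor
  · intro h
    exact mul_right_cancel₀ hx (by rw [h, one_mul])
  · intro h
    rw [h, one_mul]

/-- Let `F` be a finite field with `q` elements, `Ω` an algebraic closure of `F`.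
Let `l` be prime and `n, m ≥ 0` with `l ^ (n + m) ∣ q - 1`. Let `β ∈ F^*`, `μ ∈ Ω`
with `μ ^ (l ^ n) = β` and `μ ∉ F`, and let `s` be the least nonnegative integer with
`μ ^ (l ^ s) ∈ F` (so `s ≥ 1`). Then for every `δ ∈ Ω` with `δ ^ (l ^ (n + m)) = β`,
`[F(δ) : F] = l ^ (s + m)`. -/
theorem stmt2 (q : ℕ) (F Ω : Type*) [Field F] [Fintype F] (hq : Fintype.card F = q)
    [Field Ω] [Algebra F Ω] [IsAlgClosure F Ω]
    (l : ℕ) (hl : l.Prime) (n m : ℕ) (hdvd : l ^ (n + m) ∣ q - 1)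
    (β : F) (hβ : β ≠ 0) (μ : Ω) (hμ : μ ^ l ^ n = algebraMap F Ω β)
    (hμF : μ ∉ (algebraMap F Ω).range)
    (s : ℕ) (hs : IsLeast {k : ℕ | μ ^ l ^ k ∈ (algebraMap F Ω).range} s) :
    ∀ δ : Ω, δ ^ l ^ (n + m) = algebraMap F Ω β →
      Module.finrank F F⟮δ⟯ = l ^ (s + m) := by
  subst hq
  intro δ hδ
  haveI : Fact l.Prime := ⟨hl⟩
  set q := Fintype.card F with hqdef
  have hq2 : 2 ≤ q := Fintype.one_lt_card
  have hq1 : q - 1 ≠ 0 := by omega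
  set v := padicValNat l (q - 1) with hv
  have hnm_le_v : n + m ≤ v := by rw [hv]; exact (padicValNat_dvd_iff_le hq1).mp hdvd
  set B : Ω := algebraMap F Ω β with hB
  have hB0 : B ≠ 0 := fun h => hβ ((map_eq_zero _).mp h)
  have hBrange : B ∈ (algebraMap F Ω).range := ⟨β, rfl⟩
  have hμ0 : μ ≠ 0 := by
    intro h
    rw [h, zero_pow (pow_ne_zero n hl.ne_zero)] at hμ
    exact hB0 hμ.symm
  have hδ0 : δ ≠ 0 := by
    intro h
    rw [h, zero_pow (pow_ne_zero (n+m) hl.ne_zero)] at hδ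
    exact hB0 hδ.symm
  set e := orderOf μ with he
  -- membership characterization
  have hmem : ∀ k : ℕ, (μ ^ l ^ k ∈ (algebraMap F Ω).range ↔ e ∣ l ^ k * (q - 1)) := by
    intro k
    rw [mem_range_iff_pow_card,
      pow_card_iff (pow_ne_zero _ hμ0) (by omega), ← pow_mul, ← orderOf_dvd_iff_pow_eq_one]
  have hCs : e ∣ l ^ s * (q - 1) := (hmem s).mp hs.1
  have he0 : e ≠ 0 := by
    intro h
    rw [h] at hCs
    have := Nat.eq_zero_of_zero_dvd hCs
    have hls : 0 < l ^ s := pow_pos hl.pos s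
    have : l ^ s * (q - 1) ≠ 0 := Nat.mul_ne_zero (by omega) hq1
    omega
  have hs1 : 1 ≤ s := by
    rcases Nat.eq_zero_or_pos s with rfl | h
    · exfalso
      apply hμF
      have h0 := hs.1
      simpa using h0
    · exact h
  have hn1 : 1 ≤ n := by
    rcases Nat.eq_zero_or_pos n with rfl | h
    · exfalso
      apply hμF
      rw [show μ = μ ^ l ^ 0 by simp, hμ]
      exact hBrange
    · exact h
  obtain ⟨u, heu, hul⟩ := decomp l e hl he0
  set E := padicValNat l e with hE
  have hu0 : u ≠ 0 := by
    intro h; rw [h, mul_zero] at heu; exact he0 heu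
  have hu_dvd : u ∣ q - 1 := by
    have h1 : u ∣ l ^ s * (q - 1) := dvd_trans (Dvd.intro_left _ heu.symm) hCs
    exact (Nat.Coprime.pow_right s
      (Nat.coprime_comm.mp ((Nat.Prime.coprime_iff_not_dvd hl).mpr hul))).dvd_of_dvd_mul_left h1
  have hlv : l ^ v ∣ q - 1 := by rw [hv]; exact pow_padicValNat_dvd
  have hlvu : l ^ v * u ∣ q - 1 := Nat.Coprime.mul_dvd_of_dvd_of_dvd
    (Nat.Coprime.pow_left _ ((Nat.Prime.coprime_iff_not_dvd hl).mpr hul)) hlv hu_dvd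
  have hE_le : E ≤ s + v := by
    have h1 : l ^ E ∣ l ^ s * (q - 1) := dvd_trans ⟨u, heu⟩ hCs
    have h2 : l ^ s * (q - 1) ≠ 0 := Nat.mul_ne_zero (pow_pos hl.pos s).ne' hq1
    have h3 := (padicValNat_dvd_iff_le h2).mp h1
    rwa [padicValNat.mul (pow_pos hl.pos s).ne' hq1, padicValNat.prime_pow, ← hv] at h3
  have hE_ge : v + s ≤ E := by
    by_contra hcon
    have hC : e ∣ l ^ (s-1) * (q-1) := by
      rw [heu]
      calc l ^ E * u ∣ l ^ (s - 1) * (l ^ v * u) := by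
            rw [← mul_assoc, ← pow_add]
            exact mul_dvd_mul (pow_dvd_pow l (by omega)) dvd_rfl
        _ ∣ l ^ (s-1) * (q - 1) := mul_dvd_mul_left _ hlvu
    have := hs.2 ((hmem (s-1)).mpr hC)
    omega
  have hEeq : E = v + s := by omega
  have hsn : s ≤ n := by
    have hCn : μ ^ l ^ n ∈ (algebraMap F Ω).range := by rw [hμ]; exact hBrange
    have h1 : e ∣ l ^ n * (q - 1) := (hmem n).mp hCn
    have h2 : l ^ E ∣ l ^ n * (q - 1) := dvd_trans ⟨u, heu⟩ h1
    have h3 : l ^ n * (q - 1) ≠ 0 := Nat.mul_ne_zero (pow_pos hl.pos n).ne' hq1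
    have h4 := (padicValNat_dvd_iff_le h3).mp h2
    rw [padicValNat.mul (pow_pos hl.pos n).ne' hq1, padicValNat.prime_pow, ← hv] at h4
    omega
  -- δ analysis
  set t := orderOf δ with ht
  have hkey : ∀ N : ℕ, (t ∣ l ^ (n+m) * N ↔ e ∣ l ^ n * N) := by
    intro N
    have h1 : δ ^ (l ^ (n+m) * N) = μ ^ (l ^ n * N) := by
      rw [pow_mul, pow_mul, hδ, ← hμ]
    rw [orderOf_dvd_iff_pow_eq_one, orderOf_dvd_iff_pow_eq_one, h1]
  have ht0 : t ≠ 0 := by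
    have h1 : t ∣ l ^ (n+m) * e := (hkey e).mpr (dvd_mul_left e _)
    intro h
    rw [h] at h1
    have := Nat.eq_zero_of_zero_dvd h1
    have : l ^ (n+m) * e ≠ 0 := Nat.mul_ne_zero (pow_pos hl.pos _).ne' he0
    omega
  obtain ⟨w, htw, hwl⟩ := decomp l t hl ht0
  set T := padicValNat l t with hT
  have hEn : n ≤ E := by omega
  have h1 : t ∣ l ^ (m + E) * u := by
    have h0 : e ∣ l ^ n * (l ^ (E - n) * u) := by
      rw [heu, ← mul_assoc, ← pow_add]
      exact mul_dvd_mul (pow_dvd_pow l (by omega)) dvd_rfl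
    have h2 := (hkey (l ^ (E-n) * u)).mpr h0
    have h3 : l ^ (n+m) * (l ^ (E-n) * u) = l ^ (m + E) * u := by
      rw [← mul_assoc, ← pow_add, (by omega : n + m + (E - n) = m + E)]
    rwa [h3] at h2
  have hsplit1 : T ≤ m + E ∧ w ∣ u := split_dvd hl hwl hul (htw ▸ h1)
  have h2 : e ∣ l ^ (n + (T - (n+m))) * w := by
    have h0 : t ∣ l ^ (n+m) * (l ^ (T - (n+m)) * w) := by
      rw [htw, ← mul_assoc, ← pow_add]
      exact mul_dvd_mul (pow_dvd_pow l (by omega)) dvd_rfl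
    have h3 := (hkey (l ^ (T - (n+m)) * w)).mp h0
    rwa [← mul_assoc, ← pow_add] at h3
  have hsplit2 : E ≤ n + (T - (n+m)) ∧ u ∣ w := split_dvd hl hul hwl (heu ▸ h2)
  have hTeq : T = v + (s + m) := by
    obtain ⟨hT1, _⟩ := hsplit1
    obtain ⟨hT2, _⟩ := hsplit2
    omega
  have hwu : w = u := Nat.dvd_antisymm hsplit1.2 hsplit2.2
  -- conclude
  have hleast1 := nt_least l q u v (s+m) hl hq2 hu_dvd hul hv.symm (by omega) (by omega)
    (fun _ h1 => by omega)
  have hleast2 := finrank_isLeast (F := F) (Ω := Ω) δ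
  have hsets : {d : ℕ | 0 < d ∧ δ ^ q ^ d = δ} = {d : ℕ | 0 < d ∧ l ^ (v + (s+m)) * u ∣ q ^ d - 1} := by
    ext d
    simp only [Set.mem_setOf_eq]
    constructor
    · rintro ⟨hd, hpow⟩
      refine ⟨hd, ?_⟩
      rw [← hTeq, ← hwu, ← htw]
      rw [pow_card_iff hδ0 (Nat.one_le_pow _ _ (by omega)), ← orderOf_dvd_iff_pow_eq_one] at hpow
      exact hpow
    · rintro ⟨hd, hdvd'⟩
      refine ⟨hd, ?_⟩
      rw [pow_card_iff hδ0 (Nat.one_le_pow _ _ (by omega)), ← orderOf_dvd_iff_pow_eq_one]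
      rwa [← hTeq, ← hwu, ← htw] at hdvd'
  rw [← hqdef] at hleast2
  rw [hsets] at hleast2
  exact hleast2.unique hleast1
end

section
/- Let l be a prime number and n ≥ 1 an integer such that l^n divides q − 1. Let β ∈ F^* and let μ ∈ Ω satisfy μ^{l^n} = β. Then for every integer s with 1 ≤ s ≤ n, the degree [F(μ) : F] equals l^s if and only if β ∈ (F^*)^{l^{n−s}} and β ∉ (F^*)^{l^{n−s+1}}. -/
open IntermediateField
open Polynomial


/-- Every `(q-1)`-st root of unity in `Ω` comes from `Fˣ`. -/
lemma lemA {q : ℕ} {F Ω : Type*} [Field F] [Fintype F] (hq : Fintype.card F = q)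
    [Field Ω] [Algebra F Ω] (z : Ω) (hz : z ^ (q - 1) = 1) :
    ∃ u : Fˣ, algebraMap F Ω (u : F) = z := by
  have hq2 : 2 ≤ q := hq ▸ Fintype.one_lt_card
  have hz0 : z ≠ 0 := by
    rintro rfl
    rw [zero_pow (by omega : q - 1 ≠ 0)] at hz
    exact zero_ne_one hz
  have hzq : z ^ q = z := by
    conv_lhs => rw [show q = (q - 1) + 1 by omega]
    rw [pow_succ, hz, one_mul]
  classical
  set f : Polynomial Ω := X ^ q - X with hf
  have hdeg : f.natDegree = q := by
    rw [hf]
    rw [natDegree_sub_eq_left_of_natDegree_lt]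
    · exact natDegree_X_pow q
    · rw [natDegree_X_pow, natDegree_X]; omega
  have hfne : f ≠ 0 := fun h => by simp [h] at hdeg; omega
  set S : Finset Ω := Finset.univ.image (fun x : F => algebraMap F Ω x) with hS
  have hinj := (algebraMap F Ω).injective
  have hScard : S.card = q := by
    rw [hS, Finset.card_image_of_injective _ hinj, Finset.card_univ, hq]
  have hsub : S ⊆ f.roots.toFinset := by
    intro w hw
    rw [hS, Finset.mem_image] at hw
    obtain ⟨x, -, rfl⟩ := hw
    rw [Multiset.mem_toFinset, mem_roots hfne]
    have : x ^ q = x := by rw [← hq]; exact FiniteField.pow_card x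
    simp [hf, IsRoot, ← map_pow, this]
  have hcard : f.roots.toFinset.card ≤ q := by
    calc f.roots.toFinset.card ≤ Multiset.card f.roots := f.roots.toFinset_card_le
    _ ≤ f.natDegree := f.card_roots'
    _ = q := hdeg
  have hSeq : S = f.roots.toFinset :=
    Finset.eq_of_subset_of_card_le hsub (by omega)
  have hzmem : z ∈ f.roots.toFinset := by
    rw [Multiset.mem_toFinset, mem_roots hfne]
    simp [hf, IsRoot, hzq]
  rw [← hSeq, hS, Finset.mem_image] at hzmem
  obtain ⟨x, -, hx⟩ := hzmem
  have hx0 : x ≠ 0 := by rintro rfl; rw [map_zero] at hx; exact hz0 hx.symm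
  exact ⟨Units.mk0 x hx0, hx⟩


/-- `X ^ l ^ s - C c` is irreducible over a finite field `F` with `l ^ n ∣ q - 1`,
provided `c` is not an `l`-th power. -/
lemma lemIrr {q : ℕ} {F : Type*} [Field F] [Fintype F] (hq : Fintype.card F = q)
    {l : ℕ} (hl : l.Prime) {n : ℕ} (hdvd : l ^ n ∣ q - 1) :
    ∀ s, s ≤ n → ∀ c : F, (∀ b : F, b ^ l ≠ c) →
      Irreducible (X ^ l ^ s - C c) := by
  have hq2 : 2 ≤ q := hq ▸ Fintype.one_lt_card
  intro s
  induction s with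
  | zero =>
    intro _ c _
    simpa using irreducible_X_sub_C c
  | succ s IH =>
    intro hs c hc
    rw [show l ^ (s + 1) = l * l ^ s by rw [pow_succ, mul_comm]]
    refine X_pow_mul_sub_C_irreducible (IH (by omega) c hc) ?_
    intro E _ _ x hx
    have hint : IsIntegral F x := not_not.mp fun h ↦ by
      simpa only [degree_zero, degree_X_pow_sub_C (pow_pos hl.pos s),
        WithBot.natCast_ne_bot] using congr_arg degree (hx.symm.trans (dif_neg h))
    apply X_pow_sub_C_irreducible_of_prime hl
    intro b hb
    have hng : Algebra.norm F (AdjoinSimple.gen F x) = (-1) ^ (l ^ s) * (-c) := by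
      rw [← IntermediateField.adjoin.powerBasis_gen hint,
        Algebra.PowerBasis.norm_gen_eq_coeff_zero_minpoly]
      simp [IntermediateField.adjoin.powerBasis_gen, IntermediateField.minpoly_gen, hx,
        (pow_pos hl.pos s).ne', IntermediateField.adjoin.powerBasis_dim,
        coeff_X_pow, (pow_pos hl.pos s).ne.symm]
      rw [if_neg (pow_pos hl.pos s).ne]
      ring
    have key : Algebra.norm F b ^ l = (-1) ^ (l ^ s) * (-c) := by
      rw [← map_pow, hb, hng]
    rcases Nat.even_or_odd (l ^ s) with he | ho
    · -- then l = 2 and s ≥ 1, so 4 ∣ q - 1 and -1 is a square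
      have hl2 : l = 2 :=
        ((Nat.prime_dvd_prime_iff_eq Nat.prime_two hl).mp
          (Nat.Prime.dvd_of_dvd_pow Nat.prime_two he.two_dvd)).symm
      have hs1 : 1 ≤ s := by
        by_contra h
        have : s = 0 := by omega
        rw [this, pow_zero] at he
        exact (Nat.not_even_iff_odd.mpr odd_one) he
      have h4 : (4 : ℕ) ∣ q - 1 := by
        refine dvd_trans ?_ hdvd
        rw [show (4:ℕ) = 2 ^ 2 by norm_num, hl2]
        exact pow_dvd_pow 2 (by omega)
      have hsq : IsSquare (-1 : F) := by
        rw [FiniteField.isSquare_neg_one_iff, hq]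
        obtain ⟨k, hk⟩ := h4
        omega
      obtain ⟨r, hr⟩ := hsq
      have h2 : Algebra.norm F b ^ 2 = -c := by
        rw [hl2] at key he
        rw [key, he.neg_one_pow]; ring
      apply hc (r * Algebra.norm F b)
      rw [hl2, mul_pow, h2, pow_two, ← hr]
      ring
    · apply hc (Algebra.norm F b)
      rw [key, ho.neg_one_pow]; ring


/-- If `μ' ^ (l ^ s) = c` with `c` not an `l`-th power, then `[F(μ') : F] = l ^ s`. -/
lemma lemDeg {q : ℕ} {F Ω : Type*} [Field F] [Fintype F] (hq : Fintype.card F = q)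
    [Field Ω] [Algebra F Ω] {l : ℕ} (hl : l.Prime) {n : ℕ} (hdvd : l ^ n ∣ q - 1)
    (s : ℕ) (hs : s ≤ n) (c : F) (hc : ∀ b : F, b ^ l ≠ c)
    (μ' : Ω) (hint : IsIntegral F μ') (hμc : μ' ^ l ^ s = algebraMap F Ω c) :
    Module.finrank F F⟮μ'⟯ = l ^ s := by
  have hirr := lemIrr hq hl hdvd s hs c hc
  have hmono : (X ^ l ^ s - C c).Monic := monic_X_pow_sub_C c (pow_pos hl.pos s).ne'
  have haev : Polynomial.aeval μ' (X ^ l ^ s - C c) = 0 := by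
    simp [hμc]
  have hmin : minpoly F μ' = X ^ l ^ s - C c :=
    (minpoly.eq_of_irreducible_of_monic hirr haev hmono).symm
  rw [IntermediateField.adjoin.finrank hint, hmin, natDegree_X_pow_sub_C]

lemma lemB {q : ℕ} {F Ω : Type*} [Field F] [Fintype F] (hq : Fintype.card F = q)
    [Field Ω] [Algebra F Ω] {l : ℕ} (hl : l.Prime) {n : ℕ} (hdvd : l ^ n ∣ q - 1)
    (β : Fˣ) (μ : Ω) (hint : IsIntegral F μ) (hμ : μ ^ l ^ n = algebraMap F Ω (β : F))
    (s : ℕ) (hsn : s ≤ n)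
    (h1 : ∃ y : Fˣ, y ^ l ^ (n - s) = β) (h2 : ¬ ∃ y : Fˣ, y ^ l ^ (n - s + 1) = β) :
    Module.finrank F F⟮μ⟯ = l ^ s := by
  obtain ⟨y, hy⟩ := h1
  have hy' : (algebraMap F Ω (y : F)) ^ l ^ (n - s) = algebraMap F Ω (β : F) := by
    rw [← map_pow]
    congr 1
    exact_mod_cast congrArg Units.val hy
  have hy0 : algebraMap F Ω (y : F) ≠ 0 := by
    simp [Units.ne_zero y]
  set z : Ω := μ ^ l ^ s * (algebraMap F Ω (y : F))⁻¹ with hzdef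
  have e1 : (μ ^ l ^ s) ^ l ^ (n - s) = algebraMap F Ω (β : F) := by
    rw [← pow_mul, ← pow_add, Nat.add_sub_cancel' hsn, hμ]
  have hz1 : z ^ l ^ (n - s) = 1 := by
    rw [hzdef, mul_pow, e1, inv_pow, hy', mul_inv_cancel₀]
    simp [Units.ne_zero β]
  obtain ⟨k, hk⟩ : l ^ (n - s) ∣ q - 1 := dvd_trans (pow_dvd_pow l (Nat.sub_le n s)) hdvd
  have hzq : z ^ (q - 1) = 1 := by rw [hk, pow_mul, hz1, one_pow]
  obtain ⟨ζ, hζ⟩ := lemA hq z hzq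
  have hc : μ ^ l ^ s = algebraMap F Ω ((ζ * y : Fˣ) : F) := by
    rw [Units.val_mul, map_mul, hζ, hzdef]
    field_simp
  have hcnot : ∀ b : F, b ^ l ≠ ((ζ * y : Fˣ) : F) := by
    intro b hb
    have hb0 : b ≠ 0 := by
      rintro rfl
      rw [zero_pow hl.ne_zero] at hb
      exact (Units.ne_zero (ζ * y)) hb.symm
    apply h2
    refine ⟨Units.mk0 b hb0, Units.ext ?_⟩
    rw [Units.val_pow_eq_pow_val, Units.val_mk0]
    apply (algebraMap F Ω).injective
    rw [map_pow, show l ^ (n - s + 1) = l * l ^ (n - s) by rw [pow_succ, mul_comm]]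
    calc (algebraMap F Ω b) ^ (l * l ^ (n - s))
        = ((algebraMap F Ω b) ^ l) ^ l ^ (n - s) := by rw [pow_mul]
      _ = (algebraMap F Ω (b ^ l)) ^ l ^ (n - s) := by rw [map_pow]
      _ = (μ ^ l ^ s) ^ l ^ (n - s) := by rw [hb, hc]
      _ = algebraMap F Ω (β : F) := e1
  exact lemDeg hq hl hdvd s hsn _ hcnot μ hint hc


/-- Let `F` be a finite field with `q` elements, `Ω` an algebraic closure of `F`.
Let `l` be a prime and `n ≥ 1` with `l ^ n ∣ q - 1`. Let `β ∈ F^*` and `μ ∈ Ω` with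
`μ ^ (l ^ n) = β`. Then for every integer `s` with `1 ≤ s ≤ n`, `[F(μ) : F] = l ^ s`
iff `β` is an `l ^ (n - s)`-th power in `F^*` but not an `l ^ (n - s + 1)`-th power. -/
theorem stmt3 (q : ℕ) (F Ω : Type*) [Field F] [Fintype F] (hq : Fintype.card F = q)
    [Field Ω] [Algebra F Ω] [IsAlgClosure F Ω]
    (l : ℕ) (hl : l.Prime) (n : ℕ) (hn : 1 ≤ n) (hdvd : l ^ n ∣ q - 1)
    (β : Fˣ) (μ : Ω) (hμ : μ ^ l ^ n = algebraMap F Ω (β : F)) :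
    ∀ s : ℕ, 1 ≤ s → s ≤ n →
      (Module.finrank F F⟮μ⟯ = l ^ s ↔
        ((∃ y : Fˣ, y ^ l ^ (n - s) = β) ∧ ¬ ∃ y : Fˣ, y ^ l ^ (n - s + 1) = β)) := by
  have hint : IsIntegral F μ := by
    have : Algebra.IsAlgebraic F Ω := IsAlgClosure.isAlgebraic
    exact (this.isAlgebraic μ).isIntegral
  intro s hs1 hsn
  constructor
  · intro hdeg
    classical
    set P : ℕ → Prop := fun j => ∃ y : Fˣ, y ^ l ^ j = β with hP
    have hP0 : P 0 := ⟨β, by simp⟩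
    have hPt : P (Nat.findGreatest P n) := Nat.findGreatest_spec (Nat.zero_le n) hP0
    have ht_le : Nat.findGreatest P n ≤ n := Nat.findGreatest_le n
    set t := Nat.findGreatest P n with htdef
    by_cases htn : t = n
    · -- β is an l^n-th power, so μ ∈ F and the degree is 1, contradiction
      exfalso
      obtain ⟨y, hy⟩ := htn ▸ hPt
      have hy' : (algebraMap F Ω (y : F)) ^ l ^ n = algebraMap F Ω (β : F) := by
        rw [← map_pow]
        congr 1
        exact_mod_cast congrArg Units.val hy
      have hy0 : algebraMap F Ω (y : F) ≠ 0 := by simp [Units.ne_zero y]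
      set z : Ω := μ * (algebraMap F Ω (y : F))⁻¹ with hzdef
      have hz1 : z ^ l ^ n = 1 := by
        rw [hzdef, mul_pow, hμ, inv_pow, hy', mul_inv_cancel₀]
        simp [Units.ne_zero β]
      obtain ⟨k, hk⟩ := hdvd
      have hzq : z ^ (q - 1) = 1 := by rw [hk, pow_mul, hz1, one_pow]
      obtain ⟨ζ, hζ⟩ := lemA hq z hzq
      have hμF : μ = algebraMap F Ω ((ζ * y : Fˣ) : F) := by
        rw [Units.val_mul, map_mul, hζ, hzdef]
        field_simp
      have hbot : F⟮μ⟯ = ⊥ := by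
        rw [adjoin_simple_eq_bot_iff, IntermediateField.mem_bot]
        exact ⟨_, hμF.symm⟩
      rw [hbot, IntermediateField.finrank_bot] at hdeg
      have : 2 ≤ l ^ s := by
        calc 2 ≤ l := hl.two_le
        _ = l ^ 1 := (pow_one l).symm
        _ ≤ l ^ s := Nat.pow_le_pow_right hl.pos hs1
      omega
    · have ht : t < n := lt_of_le_of_ne ht_le htn
      have hnot : ¬ P (t + 1) := Nat.findGreatest_is_greatest (Nat.lt_succ_self t) (by omega)
      have hfin : Module.finrank F F⟮μ⟯ = l ^ (n - t) := by
        apply lemB hq hl hdvd β μ hint hμ (n - t) (Nat.sub_le n t)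
        · rw [show n - (n - t) = t by omega]
          exact hPt
        · rw [show n - (n - t) = t by omega]
          exact hnot
      have hst : s = n - t := Nat.pow_right_injective hl.two_le (show l ^ s = l ^ (n - t) by rw [← hdeg, ← hfin])
      constructor
      · rw [show n - s = t by omega]; exact hPt
      · rw [show n - s = t by omega]; exact hnot
  · rintro ⟨h1, h2⟩
    exact lemB hq hl hdvd β μ hint hμ s hsn h1 h2
end

section
/- Let l be a prime number and κ ≥ 1 an integer such that l^κ divides q − 1, and let D ∈ F[T] be a nonzero polynomial. Assume it is not the case that (l = 2, deg D is odd, and 2^{κ+1} does not divide q − 1). Then for any elements α and α′ of an algebraic closure of F(T) satisfying α^{l^κ} = D and (α′)^{l^κ} = (−1)^{deg D}·D, the subfields F(T)(α) and F(T)(α′) of that algebraic closure are equal. -/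
lemma exists_prim_root_of_dvd (q : ℕ) (F : Type*) [Field F] [Fintype F]
    (hq : Fintype.card F = q) (n : ℕ) (hn : 0 < n) (hdvd : n ∣ q - 1) :
    ∃ ξ : F, IsPrimitiveRoot ξ n := by
  classical
  have hdvd' : n ∣ Fintype.card Fˣ := by
    rwa [Fintype.card_units, hq]
  have hcard := IsCyclic.card_orderOf_eq_totient (α := Fˣ) hdvd'
  have hpos : 0 < (Finset.filter (fun a : Fˣ => orderOf a = n) Finset.univ).card := by
    rw [hcard]; exact Nat.totient_pos.2 hn
  obtain ⟨u, hu⟩ := Finset.card_pos.1 hpos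
  have hu' : orderOf u = n := (Finset.mem_filter.1 hu).2
  refine ⟨(u : F), ?_⟩
  have : IsPrimitiveRoot u n := hu' ▸ IsPrimitiveRoot.orderOf u
  exact this.map_of_injective (f := Units.coeHom F) (fun _ _ h => Units.ext h)

/-- Let `F` be a finite field with `q` elements, `l` a prime, `κ ≥ 1` with
`l ^ κ ∣ q - 1`, and `D ∈ F[T]` a nonzero polynomial. Assume it is not the case
that (`l = 2`, `deg D` odd, and `2 ^ (κ + 1) ∤ q - 1`). Then for any `α, α'` in an
algebraic closure of `F(T)` with `α ^ (l ^ κ) = D` and `α' ^ (l ^ κ) = (-1) ^ (deg D) * D`,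
the fields `F(T)(α)` and `F(T)(α')` are equal. -/
theorem stmt6 (q : ℕ) (F : Type*) [Field F] [Fintype F] (hq : Fintype.card F = q)
    (Ω : Type*) [Field Ω] [Algebra (RatFunc F) Ω] [IsAlgClosure (RatFunc F) Ω]
    (l κ : ℕ) (hl : l.Prime) (hκ : 1 ≤ κ) (hdvd : l ^ κ ∣ q - 1)
    (D : Polynomial F) (hD : D ≠ 0)
    (hexc : ¬ (l = 2 ∧ Odd D.natDegree ∧ ¬ 2 ^ (κ + 1) ∣ q - 1))
    (α α' : Ω)
    (hα : α ^ l ^ κ =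
      algebraMap (RatFunc F) Ω (algebraMap (Polynomial F) (RatFunc F) D))
    (hα' : α' ^ l ^ κ =
      algebraMap (RatFunc F) Ω
        (algebraMap (Polynomial F) (RatFunc F) ((-1) ^ D.natDegree * D))) :
    IntermediateField.adjoin (RatFunc F) {α} =
      IntermediateField.adjoin (RatFunc F) {α'} := by
  set n := l ^ κ with hn
  have hn0 : 0 < n := pow_pos hl.pos κ
  haveI : NeZero n := ⟨hn0.ne'⟩
  -- a constant `c` with `c ^ n = (-1) ^ deg D`
  obtain ⟨c, hc⟩ : ∃ c : F, c ^ n = (-1) ^ D.natDegree := by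
    rcases Nat.even_or_odd D.natDegree with hdeg | hdeg
    · exact ⟨1, by simp [hdeg.neg_one_pow]⟩
    · rcases eq_or_ne l 2 with rfl | hl2
      · have h2 : 2 ^ (κ + 1) ∣ q - 1 := by
          by_contra h; exact hexc ⟨rfl, hdeg, h⟩
        obtain ⟨η, hη⟩ := exists_prim_root_of_dvd q F hq (2 ^ (κ + 1))
          (pow_pos two_pos _) h2
        refine ⟨η, ?_⟩
        have h1 : (η ^ 2 ^ κ) * (η ^ 2 ^ κ) = 1 := by
          rw [← pow_add, ← two_mul, ← pow_succ', hη.pow_eq_one]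
        have hne : η ^ 2 ^ κ ≠ 1 := by
          intro h
          have := hη.dvd_of_pow_eq_one _ h
          have hlt : 2 ^ κ < 2 ^ (κ + 1) := by
            exact Nat.pow_lt_pow_right one_lt_two (Nat.lt_succ_self κ)
          exact absurd (Nat.le_of_dvd (pow_pos two_pos κ) this) (not_le.2 hlt)
        rw [hdeg.neg_one_pow]
        rcases mul_self_eq_one_iff.1 h1 with h | h
        · exact absurd h hne
        · exact h
      · have hodd : Odd n := Odd.pow (hl.odd_of_ne_two hl2)
        exact ⟨-1, by rw [hodd.neg_one_pow, hdeg.neg_one_pow]⟩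
  -- primitive n-th root of unity in F
  obtain ⟨ξ, hξ⟩ := exists_prim_root_of_dvd q F hq n hn0 hdvd
  set φ : F →+* Ω :=
    (algebraMap (RatFunc F) Ω).comp (algebraMap F (RatFunc F)) with hφ
  have hξΩ : IsPrimitiveRoot (φ ξ) n := hξ.map_of_injective φ.injective
  have hα0 : α ≠ 0 := by
    intro h
    apply hD
    have : algebraMap (RatFunc F) Ω (algebraMap (Polynomial F) (RatFunc F) D) = 0 := by
      rw [← hα, h, zero_pow hn0.ne']
    have h2 : algebraMap (Polynomial F) (RatFunc F) D = 0 :=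
      (map_eq_zero _).1 this
    exact (map_eq_zero_iff _ (IsFractionRing.injective _ _)).1 h2
  -- α' ^ n = (φ c * α) ^ n
  have key : α' ^ n = (φ c * α) ^ n := by
    rw [mul_pow, ← map_pow, hc, hα, hα', map_mul, map_mul]
    push_cast
    simp
  have hc0 : φ c ≠ 0 := by
    intro h
    apply hn0.ne'
    have : (φ c) ^ n = 0 := by rw [h, zero_pow hn0.ne']
    rw [← map_pow, hc] at this
    simpa using (map_eq_zero φ).1 this
  have hζ : (α' / (φ c * α)) ^ n = 1 := by
    rw [div_pow, key, div_self (pow_ne_zero _ (mul_ne_zero hc0 hα0))]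
  obtain ⟨i, _, hi⟩ := hξΩ.eq_pow_of_pow_eq_one hζ
  have hα'eq : α' = φ (ξ ^ i * c) * α := by
    rw [map_mul, map_pow]
    rw [eq_div_iff (mul_ne_zero hc0 hα0)] at hi
    rw [← hi]; ring
  set r : RatFunc F := algebraMap F (RatFunc F) (ξ ^ i * c) with hr
  have hrΩ : algebraMap (RatFunc F) Ω r = φ (ξ ^ i * c) := rfl
  have hr0 : φ (ξ ^ i * c) ≠ 0 := by
    have hξ0 : ξ ≠ 0 := hξ.ne_zero hn0.ne'
    have hcc : c ≠ 0 := by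
      intro h; rw [h] at hc0; exact hc0 (map_zero φ)
    simp [map_eq_zero, hξ0, hcc]
  apply le_antisymm
  · rw [IntermediateField.adjoin_le_iff, Set.singleton_subset_iff]
    have : α = (algebraMap (RatFunc F) Ω r)⁻¹ * α' := by
      rw [hrΩ, hα'eq, inv_mul_cancel_left₀ hr0]
    rw [this, ← map_inv₀]
    exact mul_mem (IntermediateField.algebraMap_mem _ _)
      (IntermediateField.mem_adjoin_simple_self _ _)
  · rw [IntermediateField.adjoin_le_iff, Set.singleton_subset_iff]
    rw [hα'eq, ← hrΩ]
    exact mul_mem (IntermediateField.algebraMap_mem _ _)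
      (IntermediateField.mem_adjoin_simple_self _ _)
end

section
/- Let l be a prime number and κ ≥ 1 an integer such that l^κ divides q − 1. Let γ ∈ F^*, let d be a nonnegative integer, and set ε = (−1)^d·γ. Assume it is not the case that (l = 2, d is odd, and 2^{κ+1} does not divide q − 1). Then for any μ, ν ∈ Ω with μ^{l^κ} = ε and ν^{l^κ} = γ, one has F(μ) = F(ν). -/
open IntermediateField

/-- Let `F` be a finite field with `q` elements, `Ω` an algebraic closure. Let `l` be
a prime and `κ ≥ 1` with `l ^ κ ∣ q - 1`. Let `γ ∈ F^*`, `d ≥ 0`, and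
`ε = (-1) ^ d * γ`. Assume it is not the case that (`l = 2`, `d` odd, and
`2 ^ (κ + 1) ∤ q - 1`). Then for any `μ, ν ∈ Ω` with `μ ^ (l ^ κ) = ε` and
`ν ^ (l ^ κ) = γ`, we have `F(μ) = F(ν)`. -/
theorem stmt7 (q : ℕ) (F Ω : Type*) [Field F] [Fintype F] (hq : Fintype.card F = q)
    [Field Ω] [Algebra F Ω] [IsAlgClosure F Ω]
    (l κ : ℕ) (hl : l.Prime) (hκ : 1 ≤ κ) (hdvd : l ^ κ ∣ q - 1)
    (γ : F) (hγ : γ ≠ 0) (d : ℕ) (ε : F) (hε : ε = (-1) ^ d * γ)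
    (hexc : ¬ (l = 2 ∧ Odd d ∧ ¬ 2 ^ (κ + 1) ∣ q - 1))
    (μ ν : Ω) (hμ : μ ^ l ^ κ = algebraMap F Ω ε) (hν : ν ^ l ^ κ = algebraMap F Ω γ) :
    F⟮μ⟯ = F⟮ν⟯ := by
  classical
  have hq2 : 2 ≤ q := hq ▸ Fintype.one_lt_card
  have hq1 : 0 < q - 1 := by omega
  -- every (q-1)-th root of unity in Ω comes from F
  have keyA : ∀ z : Ω, z ^ (q - 1) = 1 → ∃ c : F, algebraMap F Ω c = z := by
    intro z hz
    have hinj : Function.Injective (fun u : Fˣ => algebraMap F Ω (u : F)) := by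
      intro a b hab
      exact Units.ext ((algebraMap F Ω).injective hab)
    set S : Finset Ω := Finset.univ.image (fun u : Fˣ => algebraMap F Ω (u : F)) with hS
    have hcardS : S.card = q - 1 := by
      rw [hS, Finset.card_image_of_injective _ hinj, Finset.card_univ, Fintype.card_units, hq]
    have hsub : S ⊆ Polynomial.nthRootsFinset (q - 1) (1 : Ω) := by
      intro x hx
      simp only [hS, Finset.mem_image] at hx
      obtain ⟨u, -, rfl⟩ := hx
      rw [Polynomial.mem_nthRootsFinset hq1, ← map_pow]
      have hu : (u : F) ^ (q - 1) = 1 := by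
        rw [← hq]; exact FiniteField.pow_card_sub_one_eq_one _ u.ne_zero
      rw [hu, map_one]
    have hcardT : (Polynomial.nthRootsFinset (q - 1) (1 : Ω)).card ≤ q - 1 := by
      rw [Polynomial.nthRootsFinset_def]
      exact le_trans (Multiset.toFinset_card_le _) (Polynomial.card_nthRoots _ _)
    have hEq : S = Polynomial.nthRootsFinset (q - 1) (1 : Ω) :=
      Finset.eq_of_subset_of_card_le hsub (by rw [hcardS]; exact hcardT)
    have hzmem : z ∈ S := by
      rw [hEq, Polynomial.mem_nthRootsFinset hq1]; exact hz
    simp only [hS, Finset.mem_image] at hzmem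
    obtain ⟨u, -, hu⟩ := hzmem
    exact ⟨u, hu⟩
  -- there is b ∈ F with b ^ (l ^ κ) = (-1) ^ d
  have keyB : ∃ b : F, b ≠ 0 ∧ b ^ l ^ κ = (-1 : F) ^ d := by
    rcases Nat.even_or_odd d with hd | hd
    · exact ⟨1, one_ne_zero, by rw [one_pow, hd.neg_one_pow]⟩
    · rcases eq_or_ne l 2 with rfl | hl2
      · have h2 : 2 ^ (κ + 1) ∣ q - 1 := by
          by_contra h; exact hexc ⟨rfl, hd, h⟩
        obtain ⟨g, hg⟩ := IsCyclic.exists_generator (α := Fˣ)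
        have hog : orderOf g = q - 1 := by
          rw [orderOf_eq_card_of_forall_mem_zpowers hg, Nat.card_eq_fintype_card,
            Fintype.card_units, hq]
        obtain ⟨m, hm⟩ := h2
        have hm0 : m ≠ 0 := by rintro rfl; omega
        have hhalf : m * 2 ^ κ * 2 = q - 1 := by rw [hm, pow_succ]; ring
        set u : Fˣ := g ^ (m * 2 ^ κ) with hu
        have hu2 : u ^ 2 = 1 := by
          rw [hu, ← pow_mul, hhalf, ← hog, pow_orderOf_eq_one]
        have hune : u ≠ 1 := by
          intro h
          have : orderOf g ∣ m * 2 ^ κ := orderOf_dvd_of_pow_eq_one (hu ▸ h)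
          have hle : q - 1 ≤ m * 2 ^ κ :=
            hog ▸ Nat.le_of_dvd (by positivity) this
          omega
        have hcF : ((u : F)) ^ 2 = 1 := by
          rw [← Units.val_pow_eq_pow_val, hu2, Units.val_one]
        have hum : (u : F) = -1 := by
          rw [sq] at hcF
          rcases mul_self_eq_one_iff.mp hcF with h | h
          · exact (hune (Units.ext h)).elim
          · exact h
        refine ⟨(g : F) ^ m, pow_ne_zero _ g.ne_zero, ?_⟩
        rw [← pow_mul, ← Units.val_pow_eq_pow_val, ← hu, hum, hd.neg_one_pow]
      · refine ⟨-1, neg_ne_zero.mpr one_ne_zero, ?_⟩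
        have hodd : Odd (l ^ κ) := (hl.odd_of_ne_two hl2).pow
        rw [hodd.neg_one_pow, hd.neg_one_pow]
  obtain ⟨b, hb0, hb⟩ := keyB
  have hlκ0 : l ^ κ ≠ 0 := pow_ne_zero _ hl.pos.ne'
  have hν0 : ν ≠ 0 := by
    intro h
    rw [h, zero_pow hlκ0] at hν
    exact hγ ((algebraMap F Ω).injective (by rw [← hν, map_zero]))
  have hε0 : ε ≠ 0 := by
    rw [hε]; exact mul_ne_zero (pow_ne_zero _ (neg_ne_zero.mpr one_ne_zero)) hγ
  have hμ0 : μ ≠ 0 := by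
    intro h
    rw [h, zero_pow hlκ0] at hμ
    exact hε0 ((algebraMap F Ω).injective (by rw [← hμ, map_zero]))
  have hw : (algebraMap F Ω b * ν) ^ l ^ κ = μ ^ l ^ κ := by
    rw [mul_pow, ← map_pow, hb, hν, ← map_mul, ← hε, hμ]
  have hbν0 : algebraMap F Ω b * ν ≠ 0 :=
    mul_ne_zero ((map_ne_zero (algebraMap F Ω)).mpr hb0) hν0
  set z := μ / (algebraMap F Ω b * ν) with hzdef
  have hz1 : z ^ (q - 1) = 1 := by
    obtain ⟨k, hk⟩ := hdvd
    have hzl : z ^ l ^ κ = 1 := by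
      rw [hzdef, div_pow, ← hw, div_self (pow_ne_zero _ hbν0)]
    rw [hk, pow_mul, hzl, one_pow]
  obtain ⟨c, hc⟩ := keyA z hz1
  have hμeq : μ = algebraMap F Ω (c * b) * ν := by
    rw [map_mul, mul_assoc, hc, hzdef, div_mul_cancel₀ _ hbν0]
  have hcb0 : c * b ≠ 0 := by
    intro h
    rw [h, map_zero, zero_mul] at hμeq
    exact hμ0 hμeq
  apply le_antisymm
  · rw [adjoin_simple_le_iff, hμeq]
    exact mul_mem (IntermediateField.algebraMap_mem _ _) (mem_adjoin_simple_self F ν)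
  · rw [adjoin_simple_le_iff]
    have hνeq : ν = algebraMap F Ω (c * b)⁻¹ * μ := by
      rw [hμeq, ← mul_assoc, ← map_mul, inv_mul_cancel₀ hcb0, map_one, one_mul]
    rw [hνeq]
    exact mul_mem (IntermediateField.algebraMap_mem _ _) (mem_adjoin_simple_self F μ)
end

section
/- Let l be a prime number and let n, r be positive integers. For 1 ≤ j ≤ r let a_j and d_j be nonnegative integers with a_j ≤ n − 1 and a_1 ≤ a_2 ≤ ⋯ ≤ a_r, and let b_j and c_j be positive integers not divisible by l. Set N := Σ_{j=1}^r b_j·c_j·l^{a_j + d_j}, let t := n − min{n, v_l(N)}, and let m := max_{1 ≤ j ≤ r} (n − a_j − min{n − a_j, d_j}). Suppose i is an index, 1 ≤ i ≤ r, such that n − a_i − min{n − a_i, d_i} = m and n − a_j − d_j < m for all j > i. If m > t, then i ≥ 2 and there exists an index j < i with n − a_j − d_j = n − a_i − d_i = m. -/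
/-- Let `l` be a prime and `n, r ≥ 1`. For `j = 1, …, r` let `a j, d j ≥ 0` with
`a j ≤ n - 1` and `a` monotone, and let `b j, c j` be positive integers not
divisible by `l`. Set `N := ∑ j, b j * c j * l ^ (a j + d j)`,
`t := n - min n (v_l N)`, and `m := max_j (n - a j - min (n - a j) (d j))`.
Suppose `i` is an index with `n - a i - min (n - a i) (d i) = m` and
`n - a j - d j < m` for all `j > i`. If `m > t` then `i ≥ 2` (i.e. there is an
index before `i`) and there exists `j < i` with `n - a j - d j = n - a i - d i = m`. -/
theorem stmt8 (l : ℕ) (hl : l.Prime) (n r : ℕ) (hn : 0 < n) (hr : 0 < r)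
    (a b c d : Fin r → ℕ)
    (ha : ∀ j, a j ≤ n - 1) (hmono : Monotone a)
    (hb : ∀ j, 0 < b j) (hbl : ∀ j, ¬ l ∣ b j)
    (hc : ∀ j, 0 < c j) (hcl : ∀ j, ¬ l ∣ c j)
    (N : ℕ) (hN : N = ∑ j, b j * c j * l ^ (a j + d j))
    (t : ℕ) (ht : t = n - min n (padicValNat l N))
    (m : ℕ) (hm : m = Finset.univ.sup (fun j => n - a j - min (n - a j) (d j)))
    (i : Fin r) (hi : n - a i - min (n - a i) (d i) = m)
    (hij : ∀ j, i < j → n - a j - d j < m)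
    (hmt : m > t) :
    1 ≤ (i : ℕ) ∧ ∃ j, j < i ∧ n - a j - d j = m ∧ n - a i - d i = m := by
  have hlpos : 0 < l := hl.pos
  have hi' : n - (a i + d i) = m := by omega
  have hle : ∀ j, n - (a j + d j) ≤ m := by
    intro j
    have := hm ▸ Finset.le_sup (f := fun j => n - a j - min (n - a j) (d j))
      (Finset.mem_univ j)
    omega
  have hmn : m ≤ n := by have := hle i; omega
  have hm1 : 1 ≤ m := by omega
  -- N is positive
  have hNpos : 0 < N := by
    rw [hN]
    apply Finset.sum_pos
    · intro j _
      exact Nat.mul_pos (Nat.mul_pos (hb j) (hc j)) (Nat.pow_pos hlpos)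
    · exact Finset.univ_nonempty_iff.mpr ⟨⟨0, hr⟩⟩
  have hv : n - m + 1 ≤ padicValNat l N := by
    have : min n (padicValNat l N) ≤ padicValNat l N := min_le_right _ _
    omega
  have hdvdN : l ^ (n - m + 1) ∣ N :=
    dvd_trans (pow_dvd_pow l hv) (pow_padicValNat_dvd)
  -- find another index j with the same (truncated) value m
  have key : ∃ j, j ≠ i ∧ n - (a j + d j) = m := by
    by_contra hcon
    push_neg at hcon
    have hj' : ∀ j, j ≠ i → n - m + 1 ≤ a j + d j := by
      intro j hji
      have h1 := hle j
      have h2 := hcon j hji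
      omega
    have hei : a i + d i = n - m := by omega
    have hsplit : N = b i * c i * l ^ (a i + d i) +
        ∑ j ∈ Finset.univ.erase i, b j * c j * l ^ (a j + d j) := by
      rw [hN, ← Finset.add_sum_erase _ _ (Finset.mem_univ i)]
    have hdvdrest : l ^ (n - m + 1) ∣
        ∑ j ∈ Finset.univ.erase i, b j * c j * l ^ (a j + d j) := by
      apply Finset.dvd_sum
      intro j hjmem
      have hji : j ≠ i := (Finset.mem_erase.mp hjmem).1
      exact Dvd.dvd.mul_left (pow_dvd_pow l (hj' j hji)) _
    have hdvdterm : l ^ (n - m + 1) ∣ b i * c i * l ^ (n - m) := by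
      have h0 : l ^ (n - m + 1) ∣
          (∑ j ∈ Finset.univ.erase i, b j * c j * l ^ (a j + d j)) +
            b i * c i * l ^ (a i + d i) := by
        calc l ^ (n - m + 1) ∣ N := hdvdN
          _ = _ := by rw [hsplit]; exact Nat.add_comm _ _
      have h1 := (Nat.dvd_add_right hdvdrest).mp h0
      rwa [hei] at h1
    have hldvd : l ∣ b i * c i := by
      have h1 : l ^ (n - m) * l ∣ l ^ (n - m) * (b i * c i) := by
        rw [← pow_succ]
        rw [mul_comm] at hdvdterm
        exact hdvdterm
      exact (Nat.mul_dvd_mul_iff_left (Nat.pow_pos hlpos)).mp h1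
    rcases (Nat.Prime.dvd_mul hl).mp hldvd with h | h
    · exact hbl i h
    · exact hcl i h
  obtain ⟨j, hji, hjm⟩ := key
  have hjlt : j < i := by
    rcases lt_or_gt_of_ne hji with h | h
    · exact h
    · exfalso
      have := hij j h
      omega
  refine ⟨?_, j, hjlt, by omega, by omega⟩
  have : (j : ℕ) < (i : ℕ) := hjlt
  omega
end

section
/- Let F be a finite field with q elements of characteristic p, let l be a prime number different from p, and let λ ≤ N be nonnegative integers such that l^λ divides q − 1. Let θ ∈ F^* be an element that is not an l-th power in F^*. Then the polynomial X^{l^N} − θ·t^{l^λ} is irreducible over the field F((t)) of formal Laurent series over F. -/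
open Polynomial IntermediateField

section HahnAux

variable {Γ : Type*} [AddCommMonoid Γ] [LinearOrder Γ] [IsOrderedCancelAddMonoid Γ]
variable {R : Type*} [Ring R] [IsDomain R]

lemma hahn_leadingCoeff_mul {x y : HahnSeries Γ R} (hx : x ≠ 0) (hy : y ≠ 0) :
    (x * y).leadingCoeff = x.leadingCoeff * y.leadingCoeff := by
  have h := HahnSeries.coeff_mul_order_add_order x y
  rwa [← HahnSeries.order_mul hx hy, ← HahnSeries.leadingCoeff_eq] at h

lemma hahn_leadingCoeff_pow {x : HahnSeries Γ R} (hx : x ≠ 0) (n : ℕ) :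
    (x ^ n).leadingCoeff = x.leadingCoeff ^ n := by
  induction n with
  | zero => simpa using HahnSeries.leadingCoeff_one
  | succ n ih => rw [pow_succ, hahn_leadingCoeff_mul (pow_ne_zero n hx) hx, ih, pow_succ]

lemma hahn_leadingCoeff_neg {x : HahnSeries Γ R} :
    (-x).leadingCoeff = -x.leadingCoeff := by
  rw [HahnSeries.leadingCoeff_eq, HahnSeries.leadingCoeff_eq, HahnSeries.order_neg,
    HahnSeries.coeff_neg]

end HahnAux

universe u

section TwoPow

lemma sq_eq_gen_aux {K : Type u} [Field K] {E : Type u} [Field E] [Algebra K E]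
    (h2 : (2 : K) ≠ 0) {a : K} {x : E} (hx : minpoly K x = X ^ 2 - C a)
    {γ : K⟮x⟯} {ε : K} (hε : ε ^ 2 = 1)
    (hγ : γ ^ 2 = algebraMap K K⟮x⟯ ε * IntermediateField.AdjoinSimple.gen K x) :
    ∃ b : K, a = -(4 * b ^ 4) := by
  set α := IntermediateField.AdjoinSimple.gen K x with hαdef
  set A := algebraMap K K⟮x⟯ with hAdef
  have hXne : (X ^ 2 - C a : K[X]) ≠ 0 :=
    (Polynomial.monic_X_pow_sub_C a (by norm_num)).ne_zero
  have hintx : IsIntegral K x := by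
    by_contra h
    exact hXne (hx ▸ minpoly.eq_zero h)
  have hmin : minpoly K α = X ^ 2 - C a := by
    rw [hαdef, IntermediateField.minpoly_gen, hx]
  have hintα : IsIntegral K α := by
    by_contra h
    exact hXne (hmin ▸ minpoly.eq_zero h)
  have hinj : Function.Injective A := (algebraMap K K⟮x⟯).injective
  have hα2 : α ^ 2 = A a := by
    have h0 := minpoly.aeval K α
    rw [hmin] at h0
    simpa [sub_eq_zero] using h0
  have indep : ∀ r s : K, A r + A s * α = 0 → r = 0 ∧ s = 0 := by
    intro r s h
    by_cases hs : s = 0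
    · subst hs
      simp only [map_zero, zero_mul, add_zero] at h
      exact ⟨hinj (by simpa using h), rfl⟩
    · exfalso
      have hsn : A s ≠ 0 := fun hh => hs (hinj (by simpa using hh))
      have hαeq : α = A (-(r / s)) := by
        rw [map_neg, map_div₀]
        field_simp
        linear_combination h
      have h1 : (minpoly K α).natDegree = 1 := by
        rw [hαeq, minpoly.eq_X_sub_C_of_algebraMap_inj _ hinj]
        exact natDegree_X_sub_C _
      have h2' : (minpoly K α).natDegree = 2 := by
        rw [hmin]; exact natDegree_X_pow_sub_C
      omega
  obtain ⟨u, v, hγuv⟩ : ∃ u v : K, γ = A u + A v * α := by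
    obtain ⟨f, hf⟩ := (IntermediateField.adjoin.powerBasis hintx).exists_eq_aeval' γ
    have hgen : (IntermediateField.adjoin.powerBasis hintx).gen = α := rfl
    rw [hgen] at hf
    have hmo : (minpoly K α).Monic := minpoly.monic hintα
    have hmodeq : aeval α f = aeval α (f %ₘ minpoly K α) := by
      conv_lhs => rw [← Polynomial.modByMonic_add_div f (minpoly K α)]
      simp [minpoly.aeval]
    have hdeg : (f %ₘ minpoly K α).degree ≤ 1 := by
      have hlt := Polynomial.degree_modByMonic_lt f hmo
      have hdm : (minpoly K α).degree = ((2 : ℕ) : WithBot ℕ) := by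
        rw [hmin]; exact degree_X_pow_sub_C (by norm_num) a
      rw [hdm] at hlt
      by_cases h0 : f %ₘ minpoly K α = 0
      · simp [h0]
      · have h1 := (Polynomial.natDegree_lt_iff_degree_lt h0).mpr hlt
        refine (Polynomial.degree_le_natDegree).trans ?_
        exact_mod_cast Nat.lt_succ_iff.mp h1
    refine ⟨(f %ₘ minpoly K α).coeff 0, (f %ₘ minpoly K α).coeff 1, ?_⟩
    rw [hf, hmodeq]
    conv_lhs => rw [Polynomial.eq_X_add_C_of_degree_le_one hdeg]
    simp only [map_add, map_mul, aeval_C, aeval_X]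
    ring
  have hexp : γ ^ 2 = A (u ^ 2 + a * v ^ 2) + A (2 * u * v) * α := by
    rw [hγuv]
    simp only [map_add, map_mul, map_pow, map_ofNat]
    linear_combination (A v) ^ 2 * hα2
  have hkey := indep (u ^ 2 + a * v ^ 2) (2 * u * v - ε) (by
    rw [map_sub]
    linear_combination hγ - hexp)
  obtain ⟨h1, h2'⟩ := hkey
  have huv : 2 * u * v = ε := sub_eq_zero.mp h2'
  have hε0 : ε ≠ 0 := by
    intro h; rw [h] at hε; simp at hε
  have hv : v ≠ 0 := by
    intro h; rw [h, mul_zero] at huv; exact hε0 huv.symm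
  refine ⟨(2 * v)⁻¹, ?_⟩
  have h4 : (4 : K) ≠ 0 := by
    intro h
    have : (2 : K) * 2 = 0 := by rw [← h]; norm_num
    rcases mul_eq_zero.mp this with h' | h' <;> exact h2 h'
  field_simp
  linear_combination (16 * v ^ 2) * h1 - 4 * (2 * u * v + ε) * huv - 4 * hε

theorem irred_two_pow (n : ℕ) : ∀ (K : Type u) [Field K], (2 : K) ≠ 0 → ∀ a : K,
    (∀ b : K, b ^ 2 ≠ a) → (∀ b : K, -(4 * b ^ 4) ≠ a) →
    Irreducible (X ^ 2 ^ (n + 1) - C a) := by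
  induction n with
  | zero =>
    intro K _ _ a hsq _
    rw [pow_one]
    exact X_pow_sub_C_irreducible_of_prime Nat.prime_two hsq
  | succ n IH =>
    intro K _ h2 a hsq h4
    have h21 : (2 : ℕ) ^ (n + 2) = 2 ^ (n + 1) * 2 := by ring
    rw [h21]
    apply X_pow_mul_sub_C_irreducible (X_pow_sub_C_irreducible_of_prime Nat.prime_two hsq)
    intro E _ _ x hx
    have h2E : (2 : K⟮x⟯) ≠ 0 := by
      intro h
      apply h2
      apply (algebraMap K K⟮x⟯).injective
      rw [map_ofNat, map_zero, h]
    apply IH K⟮x⟯ h2E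
    · intro b hb
      obtain ⟨c, hc⟩ := sq_eq_gen_aux h2 hx (γ := b) (ε := 1) (by norm_num)
        (by rw [map_one, one_mul]; exact hb)
      exact h4 c hc.symm
    · intro b hb
      obtain ⟨c, hc⟩ := sq_eq_gen_aux h2 hx (γ := 2 * b ^ 2) (ε := -1) (by norm_num)
        (by rw [map_neg, map_one, neg_one_mul, ← hb]; ring)
      exact h4 c hc.symm

end TwoPow

/-- Let `F` be a finite field with `q` elements of characteristic `p`, let `l` be a
prime different from `p`, and let `λ ≤ N` be nonnegative integers with
`l ^ λ ∣ q - 1`. Let `θ ∈ F^*` not be an `l`-th power in `F^*`. Then the polynomial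
`X ^ (l ^ N) - θ * t ^ (l ^ λ)` is irreducible over the Laurent series field `F((t))`. -/
theorem stmt9 (q : ℕ) (F : Type*) [Field F] [Fintype F] (hq : Fintype.card F = q)
    (p : ℕ) [CharP F p] (l : ℕ) (hl : l.Prime) (hlp : l ≠ p)
    (lam N : ℕ) (hlamN : lam ≤ N) (hdvd : l ^ lam ∣ q - 1)
    (θ : Fˣ) (hθ : ¬ ∃ y : Fˣ, y ^ l = θ) :
    Irreducible (Polynomial.X ^ l ^ N -
      Polynomial.C (algebraMap F (LaurentSeries F) (θ : F) *
        ((PowerSeries.X : PowerSeries F) : LaurentSeries F) ^ l ^ lam)) := by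
  set a : LaurentSeries F := algebraMap F (LaurentSeries F) (θ : F) *
      ((PowerSeries.X : PowerSeries F) : LaurentSeries F) ^ l ^ lam with ha0
  have hθ0 : (θ : F) ≠ 0 := θ.ne_zero
  have ha : a = HahnSeries.single ((l ^ lam : ℕ) : ℤ) (θ : F) := by
    have h1 : (algebraMap F (LaurentSeries F)) (θ : F) = HahnSeries.single (0 : ℤ) (θ : F) := by
      rw [HahnSeries.algebraMap_apply', PowerSeries.algebraMap_apply, Algebra.algebraMap_self,
        RingHom.id_apply, HahnSeries.ofPowerSeries_C]
      simp [HahnSeries.C_apply]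
    rw [ha0, PowerSeries.coe_X, HahnSeries.single_pow, h1, HahnSeries.single_mul_single]
    simp
  have hane : a ≠ 0 := by
    rw [ha]; exact HahnSeries.single_ne_zero hθ0
  have hlc : a.leadingCoeff = (θ : F) := by
    rw [ha, HahnSeries.leadingCoeff_of_single]
  have hord : a.order = ((l ^ lam : ℕ) : ℤ) := by
    rw [ha]; exact HahnSeries.order_single hθ0
  have hpow : ∀ b : LaurentSeries F, b ^ l ≠ a := by
    intro b hb
    have hb0 : b ≠ 0 := by
      rintro rfl
      rw [zero_pow hl.ne_zero] at hb
      exact hane hb.symm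
    have hlcb : b.leadingCoeff ≠ 0 := HahnSeries.leadingCoeff_ne_zero.mpr hb0
    have : b.leadingCoeff ^ l = (θ : F) := by
      rw [← hahn_leadingCoeff_pow hb0, hb, hlc]
    exact hθ ⟨Units.mk0 _ hlcb, Units.ext (by simpa using this)⟩
  rcases eq_or_ne l 2 with rfl | hl2
  · -- l = 2
    have hp : p.Prime := CharP.char_is_prime F p
    have h2F : (2 : F) ≠ 0 := by
      intro h
      have hpd : p ∣ 2 := (CharP.cast_eq_zero_iff F p 2).mp (by exact_mod_cast h)
      exact hlp ((Nat.prime_dvd_prime_iff_eq hp Nat.prime_two).mp hpd).symm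
    have h2K : (2 : LaurentSeries F) ≠ 0 := by
      intro h
      apply h2F
      apply (algebraMap F (LaurentSeries F)).injective
      rw [map_ofNat, map_zero, h]
    rcases Nat.eq_zero_or_pos N with rfl | hN
    · have hl0 : lam = 0 := Nat.le_zero.mp hlamN
      rw [pow_zero, pow_one]
      exact irreducible_X_sub_C a
    · obtain ⟨n, rfl⟩ : ∃ n, N = n + 1 := ⟨N - 1, by omega⟩
      refine irred_two_pow n (LaurentSeries F) h2K a hpow ?_
      intro b hb
      -- hb : -(4 * b ^ 4) = a
      have hb0 : b ≠ 0 := by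
        rintro rfl
        simp at hb
        exact hane hb.symm
      have h4F : (4 : F) ≠ 0 := by
        intro h
        have : (2 : F) * 2 = 0 := by rw [← h]; norm_num
        rcases mul_eq_zero.mp this with h' | h' <;> exact h2F h'
      have h4K : (4 : LaurentSeries F) ≠ 0 := by
        intro h
        apply h4F
        apply (algebraMap F (LaurentSeries F)).injective
        rw [map_ofNat, map_zero, h]
      -- order computation
      have h4single : (4 : LaurentSeries F) = HahnSeries.single (0 : ℤ) (4 : F) := by
        rw [← HahnSeries.C_apply, ← map_ofNat (HahnSeries.C (R := F) (Γ := ℤ)) 4]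
      have hordb : a.order = 4 * b.order := by
        rw [← hb, HahnSeries.order_neg, HahnSeries.order_mul h4K (pow_ne_zero _ hb0),
          HahnSeries.order_pow b 4, h4single, HahnSeries.order_single h4F]
        push_cast
        ring
      have hdvd4 : (4 : ℤ) ∣ ((2 ^ lam : ℕ) : ℤ) := ⟨b.order, by rw [← hord, hordb]⟩
      have hdvd4' : (4 : ℕ) ∣ 2 ^ lam := by exact_mod_cast hdvd4
      have hlam2 : 2 ≤ lam := by
        by_contra h
        interval_cases lam <;> omega
      have hq4 : 4 ∣ q - 1 := dvd_trans (by
        calc (4 : ℕ) = 2 ^ 2 := by norm_num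
        _ ∣ 2 ^ lam := pow_dvd_pow 2 hlam2) hdvd
      have hq1 : 1 ≤ q := by
        rw [← hq]; exact Fintype.card_pos
      have hqmod : q % 4 ≠ 3 := by omega
      have hneg1 : IsSquare (-1 : F) := by
        rw [FiniteField.isSquare_neg_one_iff, hq]
        exact hqmod
      obtain ⟨i, hi⟩ := hneg1
      -- leading coefficients
      have hlcb : b.leadingCoeff ≠ 0 := HahnSeries.leadingCoeff_ne_zero.mpr hb0
      have hlceq : (θ : F) = -(4 * b.leadingCoeff ^ 4) := by
        rw [← hlc, ← hb, hahn_leadingCoeff_neg, hahn_leadingCoeff_mul h4K (pow_ne_zero _ hb0),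
          hahn_leadingCoeff_pow hb0, h4single, HahnSeries.leadingCoeff_of_single]
      have hi0 : i ≠ 0 := by
        intro h
        rw [h, mul_zero] at hi
        norm_num at hi
      refine hθ ⟨Units.mk0 (i * (2 * b.leadingCoeff ^ 2))
        (mul_ne_zero hi0 (mul_ne_zero h2F (pow_ne_zero _ hlcb))), Units.ext ?_⟩
      push_cast
      rw [Units.val_mk0]
      rw [hlceq]
      have : i * i = -1 := hi.symm
      linear_combination (2 * b.leadingCoeff ^ 2) ^ 2 * this
  · exact X_pow_sub_C_irreducible_of_prime_pow hl hl2 N hpow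
end
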